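/- arXiv:2312.02828 — 4 statements merged into one kernel-verified Lean document; each statement's English description precedes it below -/
import Mathlib

section
/- (Robbins–Siegmund) Let (z_t), (f_t), (g_t), (h_t) be nonnegative stochastic processes adapted to a filtration (F_t) satisfying E[z_{t+1} | F_t] ≤ (1+f_t) z_t + g_t - h_t almost surely for all t. Then on the event Ω₀ = {Σ f_t < ∞ and Σ g_t < ∞}, the limit lim_{t→∞} z_t exists (almost surely on Ω₀) and Σ_{t=0}^∞ h_t < ∞ almost surely on Ω₀. -/
open MeasureTheory Filter

namespace RSaux

variable {Ω : Type*}

noncomputable def Ind (f g : ℕ → Ω → ℝ) (a : ℕ) (t : ℕ) (ω : Ω) : ℝ :=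
  if ∑ s ∈ Finset.range (t + 1), (f s ω + g s ω) ≤ (a : ℝ) then 1 else 0

noncomputable def ZZ (z f g : ℕ → Ω → ℝ) (a : ℕ) : ℕ → Ω → ℝ
  | 0 => z 0
  | t + 1 => fun ω => Ind f g a t ω * z (t + 1) ω + (1 - Ind f g a t ω) * ZZ z f g a t ω

noncomputable def PP (f g : ℕ → Ω → ℝ) (a t : ℕ) (ω : Ω) : ℝ :=
  ∏ s ∈ Finset.range t, (1 + Ind f g a s ω * f s ω)

noncomputable def DD (f g h : ℕ → Ω → ℝ) (a t : ℕ) (ω : Ω) : ℝ :=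
  ∑ s ∈ Finset.range t,
    (PP f g a (s + 1) ω)⁻¹ * (Ind f g a s ω * h s ω - Ind f g a s ω * g s ω)

noncomputable def UU (z f g h : ℕ → Ω → ℝ) (a t : ℕ) (ω : Ω) : ℝ :=
  (PP f g a t ω)⁻¹ * ZZ z f g a t ω + DD f g h a t ω

variable {z f g h : ℕ → Ω → ℝ} {a t : ℕ} {ω : Ω}

lemma ind_nonneg : 0 ≤ Ind f g a t ω := by unfold Ind; split <;> norm_num

lemma ind_le_one : Ind f g a t ω ≤ 1 := by unfold Ind; split <;> norm_num

lemma ind_eq_zero_or_one : Ind f g a t ω = 0 ∨ Ind f g a t ω = 1 := by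
  unfold Ind; split <;> simp

lemma ind_eq_one_iff :
    Ind f g a t ω = 1 ↔ ∑ s ∈ Finset.range (t + 1), (f s ω + g s ω) ≤ (a : ℝ) := by
  unfold Ind; split <;> simp_all

lemma ind_succ (hf : ∀ t ω, 0 ≤ f t ω) (hg : ∀ t ω, 0 ≤ g t ω)
    (h1 : Ind f g a (t + 1) ω = 1) : Ind f g a t ω = 1 := by
  rw [ind_eq_one_iff] at h1 ⊢
  refine le_trans (Finset.sum_le_sum_of_subset_of_nonneg
    (Finset.range_subset_range.2 (by omega)) (fun i _ _ => add_nonneg (hf i ω) (hg i ω))) h1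

lemma ZZ_succ_of_ind (h1 : Ind f g a t ω = 1) :
    ZZ z f g a (t + 1) ω = z (t + 1) ω := by
  simp [ZZ, h1]

lemma ind_mul_ZZ (hf : ∀ t ω, 0 ≤ f t ω) (hg : ∀ t ω, 0 ≤ g t ω) :
    Ind f g a t ω * ZZ z f g a t ω = Ind f g a t ω * z t ω := by
  cases t with
  | zero => rfl
  | succ t =>
    rcases ind_eq_zero_or_one (f := f) (g := g) (a := a) (t := t + 1) (ω := ω) with h0 | h1
    · rw [h0]; ring
    · rw [ZZ_succ_of_ind (ind_succ hf hg h1)]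

lemma ZZ_nonneg (hz : ∀ t ω, 0 ≤ z t ω) : 0 ≤ ZZ z f g a t ω := by
  induction t with
  | zero => exact hz 0 ω
  | succ t ih =>
    have h0 := ind_nonneg (f := f) (g := g) (a := a) (t := t) (ω := ω)
    have h1 := ind_le_one (f := f) (g := g) (a := a) (t := t) (ω := ω)
    have := hz (t + 1) ω
    show 0 ≤ Ind f g a t ω * z (t + 1) ω + (1 - Ind f g a t ω) * ZZ z f g a t ω
    nlinarith

lemma sum_ind_le (hf : ∀ t ω, 0 ≤ f t ω) (hg : ∀ t ω, 0 ≤ g t ω) (T : ℕ) :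
    ∑ s ∈ Finset.range T, Ind f g a s ω * (f s ω + g s ω) ≤ (a : ℝ) := by
  induction T with
  | zero => simp
  | succ T ih =>
    rcases ind_eq_zero_or_one (f := f) (g := g) (a := a) (t := T) (ω := ω) with h0 | h1
    · rw [Finset.sum_range_succ, h0]; simpa using ih
    · calc ∑ s ∈ Finset.range (T + 1), Ind f g a s ω * (f s ω + g s ω)
          ≤ ∑ s ∈ Finset.range (T + 1), (f s ω + g s ω) := by
            refine Finset.sum_le_sum fun s _ => ?_
            nlinarith [ind_nonneg (f := f) (g := g) (a := a) (t := s) (ω := ω),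
              ind_le_one (f := f) (g := g) (a := a) (t := s) (ω := ω), hf s ω, hg s ω]
        _ ≤ a := (ind_eq_one_iff).1 h1

lemma sum_indf_le (hf : ∀ t ω, 0 ≤ f t ω) (hg : ∀ t ω, 0 ≤ g t ω) (T : ℕ) :
    ∑ s ∈ Finset.range T, Ind f g a s ω * f s ω ≤ (a : ℝ) := by
  calc ∑ s ∈ Finset.range T, Ind f g a s ω * f s ω
      ≤ ∑ s ∈ Finset.range T, Ind f g a s ω * (f s ω + g s ω) :=
        Finset.sum_le_sum fun s _ => by
          nlinarith [ind_nonneg (f := f) (g := g) (a := a) (t := s) (ω := ω), hg s ω]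
    _ ≤ a := sum_ind_le hf hg T

lemma sum_indg_le (hf : ∀ t ω, 0 ≤ f t ω) (hg : ∀ t ω, 0 ≤ g t ω) (T : ℕ) :
    ∑ s ∈ Finset.range T, Ind f g a s ω * g s ω ≤ (a : ℝ) := by
  calc ∑ s ∈ Finset.range T, Ind f g a s ω * g s ω
      ≤ ∑ s ∈ Finset.range T, Ind f g a s ω * (f s ω + g s ω) :=
        Finset.sum_le_sum fun s _ => by
          nlinarith [ind_nonneg (f := f) (g := g) (a := a) (t := s) (ω := ω), hf s ω]
    _ ≤ a := sum_ind_le hf hg T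

lemma indf_le (hf : ∀ t ω, 0 ≤ f t ω) (hg : ∀ t ω, 0 ≤ g t ω) :
    Ind f g a t ω * f t ω ≤ (a : ℝ) := by
  calc Ind f g a t ω * f t ω
      ≤ ∑ s ∈ Finset.range (t + 1), Ind f g a s ω * f s ω := by
        rw [Finset.sum_range_succ]
        refine le_add_of_nonneg_left <| Finset.sum_nonneg fun s _ => ?_
        exact mul_nonneg ind_nonneg (hf s ω)
    _ ≤ a := sum_indf_le hf hg (t + 1)

lemma indg_le (hf : ∀ t ω, 0 ≤ f t ω) (hg : ∀ t ω, 0 ≤ g t ω) :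
    Ind f g a t ω * g t ω ≤ (a : ℝ) := by
  calc Ind f g a t ω * g t ω
      ≤ ∑ s ∈ Finset.range (t + 1), Ind f g a s ω * g s ω := by
        rw [Finset.sum_range_succ]
        refine le_add_of_nonneg_left <| Finset.sum_nonneg fun s _ => ?_
        exact mul_nonneg ind_nonneg (hg s ω)
    _ ≤ a := sum_indg_le hf hg (t + 1)

lemma one_le_PP (hf : ∀ t ω, 0 ≤ f t ω) : 1 ≤ PP f g a t ω := by
  calc (1:ℝ) = ∏ _s ∈ Finset.range t, 1 := by simp
    _ ≤ PP f g a t ω := Finset.prod_le_prod (fun s _ => zero_le_one) fun s _ => by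
        nlinarith [mul_nonneg (ind_nonneg (f := f) (g := g) (a := a) (t := s) (ω := ω)) (hf s ω)]

lemma PP_pos (hf : ∀ t ω, 0 ≤ f t ω) : 0 < PP f g a t ω :=
  lt_of_lt_of_le one_pos (one_le_PP hf)

lemma PP_succ : PP f g a (t + 1) ω = PP f g a t ω * (1 + Ind f g a t ω * f t ω) :=
  Finset.prod_range_succ _ _

lemma PP_mono (hf : ∀ t ω, 0 ≤ f t ω) : Monotone fun t => PP f g a t ω := by
  refine monotone_nat_of_le_succ fun t => ?_
  rw [PP_succ]
  nlinarith [PP_pos (hf := hf) (g := g) (a := a) (t := t) (ω := ω),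
    mul_nonneg (ind_nonneg (f := f) (g := g) (a := a) (t := t) (ω := ω)) (hf t ω)]

lemma PP_le_exp (hf : ∀ t ω, 0 ≤ f t ω) (hg : ∀ t ω, 0 ≤ g t ω) :
    PP f g a t ω ≤ Real.exp a := by
  calc PP f g a t ω ≤ ∏ s ∈ Finset.range t, Real.exp (Ind f g a s ω * f s ω) := by
        refine Finset.prod_le_prod
          (fun s _ => by nlinarith [mul_nonneg (ind_nonneg (f := f) (g := g) (a := a) (t := s) (ω := ω)) (hf s ω)])
          (fun s _ => by nlinarith [Real.add_one_le_exp (Ind f g a s ω * f s ω)])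
    _ = Real.exp (∑ s ∈ Finset.range t, Ind f g a s ω * f s ω) := (Real.exp_sum _ _).symm
    _ ≤ Real.exp a := Real.exp_le_exp.2 (sum_indf_le hf hg t)




variable {Ω : Type*}

section Meas

variable {m0 : MeasurableSpace Ω} {μ : Measure Ω} [IsProbabilityMeasure μ]
  (ℱ : Filtration ℕ m0) (z f g h : ℕ → Ω → ℝ)

theorem rs_aux
    (hz0 : ∀ t ω, 0 ≤ z t ω) (hf0 : ∀ t ω, 0 ≤ f t ω)
    (hg0 : ∀ t ω, 0 ≤ g t ω) (hh0 : ∀ t ω, 0 ≤ h t ω)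
    (hza : Adapted ℱ z) (hfa : Adapted ℱ f) (hga : Adapted ℱ g) (hha : Adapted ℱ h)
    (hz_int : ∀ t, Integrable (z t) μ)
    (hrec : ∀ t, ∀ᵐ ω ∂μ,
      (μ[z (t + 1)|ℱ t]) ω ≤ (1 + f t ω) * z t ω + g t ω - h t ω) :
    ∀ᵐ ω ∂μ, (Summable (fun t => f t ω) ∧ Summable (fun t => g t ω)) →
      (∃ l : ℝ, Tendsto (fun t => z t ω) atTop (nhds l)) ∧
      Summable (fun t => h t ω) := by
  -- measurability of the indicator
  have ind_meas : ∀ a t : ℕ, StronglyMeasurable[ℱ t] (Ind f g a t) := by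
    intro a t
    have hsum : Measurable[ℱ t] (fun ω => ∑ s ∈ Finset.range (t + 1), (f s ω + g s ω)) := by
      refine Finset.measurable_sum _ fun s hs => ?_
      have hs' : s ≤ t := by simpa [Nat.lt_succ_iff] using Finset.mem_range.1 hs
      exact (((hfa s).stronglyMeasurable.add (hga s).stronglyMeasurable).mono (ℱ.mono hs')).measurable
    have : Measurable[ℱ t] (Ind f g a t) := by
      unfold Ind
      exact Measurable.ite (measurableSet_le hsum measurable_const)
        measurable_const measurable_const
    exact this.stronglyMeasurable
  have ZZ_meas : ∀ a t : ℕ, StronglyMeasurable[ℱ t] (ZZ z f g a t) := by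
    intro a t
    induction t with
    | zero => exact (hza 0).stronglyMeasurable
    | succ t ih =>
      show StronglyMeasurable[ℱ (t+1)] fun ω =>
        Ind f g a t ω * z (t + 1) ω + (1 - Ind f g a t ω) * ZZ z f g a t ω
      exact ((((ind_meas a t).mono (ℱ.mono t.le_succ)).mul (hza (t+1)).stronglyMeasurable).add
        (((stronglyMeasurable_const.sub ((ind_meas a t).mono (ℱ.mono t.le_succ)))).mul
          (ih.mono (ℱ.mono t.le_succ))))
  have ZZ_int : ∀ a t : ℕ, Integrable (ZZ z f g a t) μ := by
    intro a t
    induction t with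
    | zero => exact hz_int 0
    | succ t ih =>
      have h1 : Integrable (fun ω => Ind f g a t ω * z (t + 1) ω) μ :=
        (hz_int (t+1)).bdd_mul (c := 1) ((ind_meas a t).mono (ℱ.le t)).aestronglyMeasurable
          (Eventually.of_forall fun ω => by
            rw [Real.norm_eq_abs, abs_of_nonneg ind_nonneg]; exact ind_le_one)
      have h2 : Integrable (fun ω => (1 - Ind f g a t ω) * ZZ z f g a t ω) μ :=
        ih.bdd_mul (c := 1) ((stronglyMeasurable_const.sub ((ind_meas a t).mono (ℱ.le t))).aestronglyMeasurable)
          (Eventually.of_forall fun ω => by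
            rw [Real.norm_eq_abs, abs_of_nonneg (by nlinarith [ind_le_one (f := f) (g := g) (a := a) (t := t) (ω := ω)])]
            nlinarith [ind_nonneg (f := f) (g := g) (a := a) (t := t) (ω := ω)])
      exact h1.add h2
  have Gp_int : ∀ a t : ℕ, Integrable (fun ω => Ind f g a t ω * g t ω) μ := by
    intro a t
    refine Integrable.mono' (integrable_const (a : ℝ))
      ((((ind_meas a t).mono (ℱ.le t)).mul ((hga t).stronglyMeasurable.mono (ℱ.le t))).aestronglyMeasurable) ?_
    refine Eventually.of_forall fun ω => ?_
    rw [Real.norm_eq_abs, abs_of_nonneg (mul_nonneg ind_nonneg (hg0 t ω))]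
    exact indg_le hf0 hg0
  have cz_nonneg : ∀ t : ℕ, 0 ≤ᵐ[μ] μ[z (t + 1)|ℱ t] := fun t =>
    condExp_nonneg (Eventually.of_forall fun ω => hz0 (t+1) ω)
  have hh_le : ∀ t : ℕ, ∀ᵐ ω ∂μ, h t ω ≤ (1 + f t ω) * z t ω + g t ω := by
    intro t
    filter_upwards [hrec t, cz_nonneg t] with ω h1 h2
    simp only [Pi.zero_apply] at h2
    linarith
  have Hp_int : ∀ a t : ℕ, Integrable (fun ω => Ind f g a t ω * h t ω) μ := by
    intro a t
    refine Integrable.mono' (((hz_int t).const_mul (1 + (a : ℝ))).add (integrable_const (a : ℝ)))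
      ((((ind_meas a t).mono (ℱ.le t)).mul ((hha t).stronglyMeasurable.mono (ℱ.le t))).aestronglyMeasurable) ?_
    filter_upwards [hh_le t] with ω h1
    rw [Real.norm_eq_abs, abs_of_nonneg (mul_nonneg ind_nonneg (hh0 t ω))]
    have e1 : Ind f g a t ω * f t ω ≤ (a : ℝ) := indf_le hf0 hg0
    have e2 : Ind f g a t ω * g t ω ≤ (a : ℝ) := indg_le hf0 hg0
    have e3 : Ind f g a t ω ≤ 1 := ind_le_one
    have e4 : (0:ℝ) ≤ Ind f g a t ω := ind_nonneg
    have e5 : 0 ≤ z t ω := hz0 t ω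
    have e6 : 0 ≤ h t ω := hh0 t ω
    have e7 : Ind f g a t ω * h t ω ≤ Ind f g a t ω * ((1 + f t ω) * z t ω + g t ω) :=
      mul_le_mul_of_nonneg_left h1 e4
    have e8 : (Ind f g a t ω + Ind f g a t ω * f t ω) * z t ω ≤ (1 + (a:ℝ)) * z t ω := by
      nlinarith
    have e9 : Ind f g a t ω * ((1 + f t ω) * z t ω + g t ω)
        = (Ind f g a t ω + Ind f g a t ω * f t ω) * z t ω + Ind f g a t ω * g t ω := by ring
    simp only [Pi.add_apply]
    linarith
  have step : ∀ a t : ℕ, μ[ZZ z f g a (t + 1)|ℱ t] ≤ᵐ[μ] fun ω =>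
      (1 + Ind f g a t ω * f t ω) * ZZ z f g a t ω
        + Ind f g a t ω * g t ω - Ind f g a t ω * h t ω := by
    intro a t
    have hA_int : Integrable (fun ω => Ind f g a t ω * z (t + 1) ω) μ :=
      (hz_int (t+1)).bdd_mul (c := 1) ((ind_meas a t).mono (ℱ.le t)).aestronglyMeasurable
        (Eventually.of_forall fun ω => by
          rw [Real.norm_eq_abs, abs_of_nonneg ind_nonneg]; exact ind_le_one)
    have hB_int : Integrable (fun ω => (1 - Ind f g a t ω) * ZZ z f g a t ω) μ :=
      (ZZ_int a t).bdd_mul (c := 1)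
        ((stronglyMeasurable_const.sub ((ind_meas a t).mono (ℱ.le t))).aestronglyMeasurable)
        (Eventually.of_forall fun ω => by
          rw [Real.norm_eq_abs, abs_of_nonneg (by nlinarith [ind_le_one (f := f) (g := g) (a := a) (t := t) (ω := ω)])]
          nlinarith [ind_nonneg (f := f) (g := g) (a := a) (t := t) (ω := ω)])
    have hsplit : ZZ z f g a (t + 1) = (fun ω => Ind f g a t ω * z (t + 1) ω)
        + (fun ω => (1 - Ind f g a t ω) * ZZ z f g a t ω) := rfl
    have e1 : μ[ZZ z f g a (t + 1)|ℱ t] =ᵐ[μ]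
        μ[fun ω => Ind f g a t ω * z (t + 1) ω|ℱ t]
          + μ[fun ω => (1 - Ind f g a t ω) * ZZ z f g a t ω|ℱ t] := by
      rw [hsplit]; exact condExp_add hA_int hB_int _
    have e2 : μ[fun ω => Ind f g a t ω * z (t + 1) ω|ℱ t] =ᵐ[μ]
        fun ω => Ind f g a t ω * (μ[z (t + 1)|ℱ t]) ω :=
      condExp_mul_of_stronglyMeasurable_left (ind_meas a t) hA_int (hz_int (t+1))
    have e3 : μ[fun ω => (1 - Ind f g a t ω) * ZZ z f g a t ω|ℱ t]
        = fun ω => (1 - Ind f g a t ω) * ZZ z f g a t ω :=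
      condExp_of_stronglyMeasurable (ℱ.le t)
        ((stronglyMeasurable_const.sub (ind_meas a t)).mul (ZZ_meas a t)) hB_int
    filter_upwards [e1, e2, hrec t] with ω h1 h2 h3
    rw [Pi.add_apply] at h1
    have h4 : (μ[fun ω => (1 - Ind f g a t ω) * ZZ z f g a t ω|ℱ t]) ω
        = (1 - Ind f g a t ω) * ZZ z f g a t ω := by rw [e3]
    rw [h1, h2, h4]
    have key : Ind f g a t ω * ZZ z f g a t ω = Ind f g a t ω * z t ω := ind_mul_ZZ hf0 hg0
    have e4 : Ind f g a t ω * (μ[z (t + 1)|ℱ t]) ω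
        ≤ Ind f g a t ω * ((1 + f t ω) * z t ω + g t ω - h t ω) :=
      mul_le_mul_of_nonneg_left h3 ind_nonneg
    have e5 : Ind f g a t ω * ((1 + f t ω) * z t ω + g t ω - h t ω)
        + (1 - Ind f g a t ω) * ZZ z f g a t ω
        = (1 + Ind f g a t ω * f t ω) * ZZ z f g a t ω
          + Ind f g a t ω * g t ω - Ind f g a t ω * h t ω := by
      linear_combination (-(1 + f t ω)) * key
    linarith
  -- measurability of PP and DD
  have PP_meas : ∀ a T t : ℕ, T ≤ t + 1 → StronglyMeasurable[ℱ t] (PP f g a T) := by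
    intro a T t hT
    unfold PP
    refine Finset.stronglyMeasurable_fun_prod _ fun s hs => ?_
    have hs' : s ≤ t := by
      have := Finset.mem_range.1 hs; omega
    exact stronglyMeasurable_const.add
      (((ind_meas a s).mul (hfa s).stronglyMeasurable).mono (ℱ.mono hs'))
  have PPinv_meas : ∀ a T t : ℕ, T ≤ t + 1 →
      StronglyMeasurable[ℱ t] (fun ω => (PP f g a T ω)⁻¹) := by
    intro a T t hT
    exact ((PP_meas a T t hT).measurable.inv).stronglyMeasurable
  have PPinv_bd : ∀ a T : ℕ, ∀ ω, ‖(PP f g a T ω)⁻¹‖ ≤ 1 := by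
    intro a T ω
    rw [Real.norm_eq_abs, abs_of_nonneg (inv_nonneg.2 (PP_pos hf0).le)]
    exact inv_le_one_of_one_le₀ (one_le_PP hf0)
  have DD_meas : ∀ a T t : ℕ, T ≤ t + 1 → StronglyMeasurable[ℱ t] (DD f g h a T) := by
    intro a T t hT
    unfold DD
    refine Finset.stronglyMeasurable_fun_sum _ fun s hs => ?_
    have hs' : s ≤ t := by have := Finset.mem_range.1 hs; omega
    have hs'' : s + 1 ≤ t + 1 := by omega
    exact (PPinv_meas a (s+1) t hs'').mul
      ((((ind_meas a s).mul (hha s).stronglyMeasurable).sub ((ind_meas a s).mul (hga s).stronglyMeasurable)).mono (ℱ.mono hs'))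
  have DD_int : ∀ a T : ℕ, Integrable (DD f g h a T) μ := by
    intro a T
    have : Integrable (fun ω => ∑ s ∈ Finset.range T,
        (PP f g a (s + 1) ω)⁻¹ * (Ind f g a s ω * h s ω - Ind f g a s ω * g s ω)) μ := by
      refine integrable_finset_sum _ fun s hs => ?_
      exact ((Hp_int a s).sub (Gp_int a s)).bdd_mul
        ((PPinv_meas a (s+1) s (by omega)).mono (ℱ.le s)).aestronglyMeasurable
        (Eventually.of_forall fun ω => PPinv_bd a (s+1) ω)
    exact this
  have UU_int : ∀ a t : ℕ, Integrable (UU z f g h a t) μ := by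
    intro a t
    exact ((ZZ_int a t).bdd_mul
      ((PPinv_meas a t t (by omega)).mono (ℱ.le t)).aestronglyMeasurable
      (Eventually.of_forall fun ω => PPinv_bd a t ω)).add (DD_int a t)
  have UU_adapted : ∀ a : ℕ, Adapted ℱ (UU z f g h a) := by
    intro a t
    exact (((PPinv_meas a t t (by omega)).mul (ZZ_meas a t)).add (DD_meas a t t (by omega))).measurable
  have Usuper : ∀ a : ℕ, Supermartingale (UU z f g h a) ℱ μ := by
    intro a
    refine supermartingale_nat (UU_adapted a).stronglyAdapted (UU_int a) fun t => ?_
    have hX_int : Integrable (fun ω => (PP f g a (t + 1) ω)⁻¹ * ZZ z f g a (t + 1) ω) μ :=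
      (ZZ_int a (t+1)).bdd_mul
        ((PPinv_meas a (t+1) (t+1) (by omega)).mono (ℱ.le (t+1))).aestronglyMeasurable
        (Eventually.of_forall fun ω => PPinv_bd a (t+1) ω)
    have hsplit : UU z f g h a (t + 1) = (fun ω => (PP f g a (t + 1) ω)⁻¹ * ZZ z f g a (t + 1) ω)
        + DD f g h a (t + 1) := rfl
    have e1 : μ[UU z f g h a (t + 1)|ℱ t] =ᵐ[μ]
        μ[fun ω => (PP f g a (t + 1) ω)⁻¹ * ZZ z f g a (t + 1) ω|ℱ t]
          + μ[DD f g h a (t + 1)|ℱ t] := by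
      rw [hsplit]; exact condExp_add hX_int (DD_int a (t+1)) _
    have e2 : μ[fun ω => (PP f g a (t + 1) ω)⁻¹ * ZZ z f g a (t + 1) ω|ℱ t] =ᵐ[μ]
        fun ω => (PP f g a (t + 1) ω)⁻¹ * (μ[ZZ z f g a (t + 1)|ℱ t]) ω :=
      condExp_mul_of_stronglyMeasurable_left (PPinv_meas a (t+1) t (by omega)) hX_int (ZZ_int a (t+1))
    have e3 : μ[DD f g h a (t + 1)|ℱ t] = DD f g h a (t + 1) :=
      condExp_of_stronglyMeasurable (ℱ.le t) (DD_meas a (t+1) t (by omega)) (DD_int a (t+1))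
    filter_upwards [e1, e2, step a t] with ω h1 h2 h3
    rw [Pi.add_apply] at h1
    have h4 : (μ[DD f g h a (t + 1)|ℱ t]) ω = DD f g h a (t + 1) ω := by rw [e3]
    rw [h1, h2, h4]
    have hinv_nonneg : (0:ℝ) ≤ (PP f g a (t + 1) ω)⁻¹ := inv_nonneg.2 (PP_pos hf0).le
    have e4 : (PP f g a (t + 1) ω)⁻¹ * (μ[ZZ z f g a (t + 1)|ℱ t]) ω
        ≤ (PP f g a (t + 1) ω)⁻¹ * ((1 + Ind f g a t ω * f t ω) * ZZ z f g a t ω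
            + Ind f g a t ω * g t ω - Ind f g a t ω * h t ω) :=
      mul_le_mul_of_nonneg_left h3 hinv_nonneg
    have hDDsucc : DD f g h a (t + 1) ω = DD f g h a t ω
        + (PP f g a (t + 1) ω)⁻¹ * (Ind f g a t ω * h t ω - Ind f g a t ω * g t ω) :=
      Finset.sum_range_succ _ _
    have hinvP : (PP f g a (t + 1) ω)⁻¹ * (1 + Ind f g a t ω * f t ω) = (PP f g a t ω)⁻¹ := by
      rw [PP_succ]
      have h1p : (0:ℝ) < 1 + Ind f g a t ω * f t ω := by
        nlinarith [mul_nonneg (ind_nonneg (f := f) (g := g) (a := a) (t := t) (ω := ω)) (hf0 t ω)]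
      have h2p : (0:ℝ) < PP f g a t ω := PP_pos hf0
      field_simp
    have e5 : (PP f g a (t + 1) ω)⁻¹ * ((1 + Ind f g a t ω * f t ω) * ZZ z f g a t ω
            + Ind f g a t ω * g t ω - Ind f g a t ω * h t ω) + DD f g h a (t + 1) ω
        = UU z f g h a t ω := by
      rw [hDDsucc]
      show _ = (PP f g a t ω)⁻¹ * ZZ z f g a t ω + DD f g h a t ω
      linear_combination (ZZ z f g a t ω) * hinvP
    linarith
  -- lower bound for UU
  have DD_lb : ∀ a T : ℕ, ∀ ω, -(a:ℝ) ≤ DD f g h a T ω := by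
    intro a T ω
    have hterm : ∀ s ∈ Finset.range T,
        -(Ind f g a s ω * g s ω) ≤ (PP f g a (s + 1) ω)⁻¹ * (Ind f g a s ω * h s ω - Ind f g a s ω * g s ω) := by
      intro s _
      have h1 : (0:ℝ) ≤ (PP f g a (s+1) ω)⁻¹ := inv_nonneg.2 (PP_pos hf0).le
      have h2 : (PP f g a (s+1) ω)⁻¹ ≤ 1 := inv_le_one_of_one_le₀ (one_le_PP hf0)
      have h3 : (0:ℝ) ≤ Ind f g a s ω * h s ω := mul_nonneg ind_nonneg (hh0 s ω)
      have h4 : (0:ℝ) ≤ Ind f g a s ω * g s ω := mul_nonneg ind_nonneg (hg0 s ω)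
      nlinarith
    calc -(a:ℝ) ≤ -∑ s ∈ Finset.range T, Ind f g a s ω * g s ω := by
          simpa using neg_le_neg (sum_indg_le (a := a) (ω := ω) hf0 hg0 T)
      _ = ∑ s ∈ Finset.range T, -(Ind f g a s ω * g s ω) := by
          rw [Finset.sum_neg_distrib]
      _ ≤ DD f g h a T ω := Finset.sum_le_sum hterm
  have UU_lb : ∀ a T : ℕ, ∀ ω, -(a:ℝ) ≤ UU z f g h a T ω := by
    intro a T ω
    have h1 : (0:ℝ) ≤ (PP f g a T ω)⁻¹ * ZZ z f g a T ω :=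
      mul_nonneg (inv_nonneg.2 (PP_pos hf0).le) (ZZ_nonneg hz0)
    have := DD_lb a T ω
    unfold UU
    linarith
  -- integral bound
  have UU_integral_le : ∀ a t : ℕ, ∫ ω, UU z f g h a t ω ∂μ ≤ ∫ ω, UU z f g h a 0 ω ∂μ := by
    intro a t
    have h1 : μ[UU z f g h a t|ℱ 0] ≤ᵐ[μ] UU z f g h a 0 := (Usuper a).condExp_ae_le (Nat.zero_le t)
    calc ∫ ω, UU z f g h a t ω ∂μ = ∫ ω, (μ[UU z f g h a t|ℱ 0]) ω ∂μ :=
          (integral_condExp (ℱ.le 0)).symm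
      _ ≤ ∫ ω, UU z f g h a 0 ω ∂μ :=
          integral_mono_ae integrable_condExp (UU_int a 0) h1
  -- L¹ bound and convergence
  have Uconv : ∀ a : ℕ, ∀ᵐ ω ∂μ, ∃ c : ℝ, Tendsto (fun t => UU z f g h a t ω) atTop (nhds c) := by
    intro a
    set B : ℝ := ∫ ω, UU z f g h a 0 ω ∂μ + 2 * a with hB
    have hnorm : ∀ t, eLpNorm (UU z f g h a t) 1 μ ≤ ENNReal.ofReal B := by
      intro t
      have h1 : eLpNorm (UU z f g h a t) 1 μ = ENNReal.ofReal (∫ ω, ‖UU z f g h a t ω‖ ∂μ) := by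
        rw [eLpNorm_one_eq_lintegral_enorm,
          ← ofReal_integral_norm_eq_lintegral_enorm (UU_int a t)]
      rw [h1]
      refine ENNReal.ofReal_le_ofReal ?_
      have h2 : ∀ ω, ‖UU z f g h a t ω‖ ≤ UU z f g h a t ω + 2 * a := by
        intro ω
        have := UU_lb a t ω
        rw [Real.norm_eq_abs]
        have ha0 : (0:ℝ) ≤ a := Nat.cast_nonneg a
        rcases abs_cases (UU z f g h a t ω) with ⟨he, _⟩ | ⟨he, _⟩ <;> rw [he] <;> linarith
      calc ∫ ω, ‖UU z f g h a t ω‖ ∂μ ≤ ∫ ω, (UU z f g h a t ω + 2 * a) ∂μ :=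
            integral_mono (UU_int a t).norm ((UU_int a t).add (integrable_const _)) h2
        _ = ∫ ω, UU z f g h a t ω ∂μ + 2 * a := by
            rw [integral_add (UU_int a t) (integrable_const _)]
            simp [measure_univ]
        _ ≤ B := by have := UU_integral_le a t; rw [hB]; linarith
    have hsub : Submartingale (-(UU z f g h a)) ℱ μ := (Usuper a).neg
    have hb : ∀ t, eLpNorm ((-(UU z f g h a)) t) 1 μ ≤ (B.toNNReal : ENNReal) := by
      intro t
      have : (-(UU z f g h a)) t = -(UU z f g h a t) := rfl
      rw [this, eLpNorm_neg]
      exact (hnorm t).trans_eq rfl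
    filter_upwards [hsub.ae_tendsto_limitProcess hb] with ω hω
    refine ⟨-(ℱ.limitProcess (-(UU z f g h a)) μ ω), ?_⟩
    have : (fun t => UU z f g h a t ω) = fun t => -((-(UU z f g h a)) t ω) := by
      funext t; simp
    rw [this]
    exact hω.neg
  -- final pointwise assembly
  have hae : ∀ᵐ ω ∂μ, ∀ a : ℕ, ∃ c : ℝ, Tendsto (fun t => UU z f g h a t ω) atTop (nhds c) :=
    ae_all_iff.2 Uconv
  filter_upwards [hae] with ω hω hsummable
  obtain ⟨hsf, hsg⟩ := hsummable
  have hfg_sum : Summable (fun s => f s ω + g s ω) := hsf.add hsg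
  obtain ⟨a, ha⟩ := exists_nat_ge (∑' s, (f s ω + g s ω))
  have hind : ∀ t, Ind f g a t ω = 1 := by
    intro t
    refine ind_eq_one_iff.2 (le_trans ?_ ha)
    exact Summable.sum_le_tsum _ (fun i _ => add_nonneg (hf0 i ω) (hg0 i ω)) hfg_sum
  have hZz : ∀ t, ZZ z f g a t ω = z t ω := by
    intro t
    cases t with
    | zero => rfl
    | succ t => exact ZZ_succ_of_ind (hind t)
  obtain ⟨c, hc⟩ := hω a
  obtain ⟨B, hB⟩ := hc.bddAbove_range
  have hBB : ∀ t, UU z f g h a t ω ≤ B := fun t => hB ⟨t, rfl⟩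
  set Q : ℕ → ℝ := fun s => (PP f g a (s + 1) ω)⁻¹ with hQ
  have hQpos : ∀ s, 0 < Q s := fun s => inv_pos.2 (PP_pos hf0)
  have hQ1 : ∀ s, Q s ≤ 1 := fun s => inv_le_one_of_one_le₀ (one_le_PP hf0)
  have hDD : ∀ T, DD f g h a T ω
      = ∑ s ∈ Finset.range T, Q s * h s ω - ∑ s ∈ Finset.range T, Q s * g s ω := by
    intro T
    rw [← Finset.sum_sub_distrib]
    unfold DD
    refine Finset.sum_congr rfl fun s _ => ?_
    rw [hind s]; ring
  have hUU : ∀ T, UU z f g h a T ω = (PP f g a T ω)⁻¹ * z T ω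
      + (∑ s ∈ Finset.range T, Q s * h s ω - ∑ s ∈ Finset.range T, Q s * g s ω) := by
    intro T
    unfold UU
    rw [hZz T, hDD T]
  have hsum_g_le : ∀ T, ∑ s ∈ Finset.range T, Q s * g s ω ≤ (a : ℝ) := by
    intro T
    calc ∑ s ∈ Finset.range T, Q s * g s ω
        ≤ ∑ s ∈ Finset.range T, Ind f g a s ω * g s ω := by
          refine Finset.sum_le_sum fun s _ => ?_
          rw [hind s, one_mul]
          nlinarith [hQpos s, hQ1 s, hg0 s ω]
      _ ≤ a := sum_indg_le hf0 hg0 T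
  have hsum_h_bdd : ∀ T, ∑ s ∈ Finset.range T, Q s * h s ω ≤ B + a := by
    intro T
    have h1 := hUU T
    have h2 : 0 ≤ (PP f g a T ω)⁻¹ * z T ω :=
      mul_nonneg (inv_nonneg.2 (PP_pos hf0).le) (hz0 T ω)
    have h3 := hBB T
    have h4 := hsum_g_le T
    linarith
  have hQh_sum : Summable (fun s => Q s * h s ω) :=
    summable_of_sum_range_le (fun s => mul_nonneg (hQpos s).le (hh0 s ω)) hsum_h_bdd
  have hh_sum : Summable (fun s => h s ω) := by
    refine Summable.of_nonneg_of_le (fun s => hh0 s ω) (fun s => ?_)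
      (hQh_sum.mul_left (Real.exp a))
    have hp : 0 < PP f g a (s + 1) ω := PP_pos hf0
    have hple : PP f g a (s + 1) ω ≤ Real.exp a := PP_le_exp hf0 hg0
    have he : h s ω = PP f g a (s + 1) ω * (Q s * h s ω) := by
      rw [hQ]; field_simp
    calc h s ω = PP f g a (s + 1) ω * (Q s * h s ω) := he
      _ ≤ Real.exp a * (Q s * h s ω) :=
          mul_le_mul_of_nonneg_right hple (mul_nonneg (hQpos s).le (hh0 s ω))
  have hQg_sum : Summable (fun s => Q s * g s ω) := by
    refine Summable.of_nonneg_of_le (fun s => mul_nonneg (hQpos s).le (hg0 s ω))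
      (fun s => ?_) hsg
    nlinarith [hQpos s, hQ1 s, hg0 s ω]
  have hAten : Tendsto (fun T => ∑ s ∈ Finset.range T, Q s * h s ω) atTop
      (nhds (∑' s, Q s * h s ω)) := hQh_sum.hasSum.tendsto_sum_nat
  have hCten : Tendsto (fun T => ∑ s ∈ Finset.range T, Q s * g s ω) atTop
      (nhds (∑' s, Q s * g s ω)) := hQg_sum.hasSum.tendsto_sum_nat
  have hPmono : Monotone (fun T => PP f g a T ω) := PP_mono hf0
  have hPbdd : BddAbove (Set.range fun T => PP f g a T ω) :=
    ⟨Real.exp a, by rintro x ⟨T, rfl⟩; exact PP_le_exp hf0 hg0⟩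
  have hPten : Tendsto (fun T => PP f g a T ω) atTop (nhds (⨆ T, PP f g a T ω)) :=
    tendsto_atTop_ciSup hPmono hPbdd
  have hinvz_ten : Tendsto (fun T => (PP f g a T ω)⁻¹ * z T ω) atTop
      (nhds (c - (∑' s, Q s * h s ω) + ∑' s, Q s * g s ω)) := by
    have he : (fun T => (PP f g a T ω)⁻¹ * z T ω)
        = fun T => UU z f g h a T ω - ∑ s ∈ Finset.range T, Q s * h s ω
            + ∑ s ∈ Finset.range T, Q s * g s ω := by
      funext T; rw [hUU T]; ring
    rw [he]
    exact (hc.sub hAten).add hCten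
  refine ⟨⟨(c - (∑' s, Q s * h s ω) + ∑' s, Q s * g s ω) * (⨆ T, PP f g a T ω), ?_⟩, hh_sum⟩
  have he : (fun T => z T ω) = fun T => ((PP f g a T ω)⁻¹ * z T ω) * PP f g a T ω := by
    funext T
    have hp : PP f g a T ω ≠ 0 := (PP_pos hf0).ne'
    field_simp
  rw [he]
  exact hinvz_ten.mul hPten


end Meas

end RSaux

/-- Robbins–Siegmund almost-supermartingale theorem. -/
theorem robbins_siegmund {Ω : Type*} {m0 : MeasurableSpace Ω}
    {μ : Measure Ω} [IsProbabilityMeasure μ]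
    (ℱ : Filtration ℕ m0)
    (z f g h : ℕ → Ω → ℝ)
    (hz_nonneg : ∀ t, ∀ᵐ ω ∂μ, 0 ≤ z t ω)
    (hf_nonneg : ∀ t, ∀ᵐ ω ∂μ, 0 ≤ f t ω)
    (hg_nonneg : ∀ t, ∀ᵐ ω ∂μ, 0 ≤ g t ω)
    (hh_nonneg : ∀ t, ∀ᵐ ω ∂μ, 0 ≤ h t ω)
    (hz_adapted : Adapted ℱ z) (hf_adapted : Adapted ℱ f)
    (hg_adapted : Adapted ℱ g) (hh_adapted : Adapted ℱ h)
    (hz_int : ∀ t, Integrable (z t) μ)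
    (hrec : ∀ t, ∀ᵐ ω ∂μ,
      (μ[z (t + 1)|ℱ t]) ω ≤ (1 + f t ω) * z t ω + g t ω - h t ω) :
    ∀ᵐ ω ∂μ, (Summable (fun t => f t ω) ∧ Summable (fun t => g t ω)) →
      (∃ l : ℝ, Tendsto (fun t => z t ω) atTop (nhds l)) ∧
      Summable (fun t => h t ω) := by
  classical
  set z' : ℕ → Ω → ℝ := fun t ω => max (z t ω) 0 with hz'def
  set f' : ℕ → Ω → ℝ := fun t ω => max (f t ω) 0 with hf'def
  set g' : ℕ → Ω → ℝ := fun t ω => max (g t ω) 0 with hg'def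
  set h' : ℕ → Ω → ℝ := fun t ω => max (h t ω) 0 with hh'def
  have hz'a : Adapted ℱ z' := fun t =>
    (hz_adapted t).max measurable_const
  have hf'a : Adapted ℱ f' := fun t =>
    (hf_adapted t).max measurable_const
  have hg'a : Adapted ℱ g' := fun t =>
    (hg_adapted t).max measurable_const
  have hh'a : Adapted ℱ h' := fun t =>
    (hh_adapted t).max measurable_const
  have hz'_int : ∀ t, Integrable (z' t) μ := fun t => (hz_int t).pos_part
  have hze : ∀ t, z t =ᵐ[μ] z' t := fun t =>
    (hz_nonneg t).mono fun ω hω => (max_eq_left hω).symm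
  have hfe : ∀ t, f t =ᵐ[μ] f' t := fun t =>
    (hf_nonneg t).mono fun ω hω => (max_eq_left hω).symm
  have hge : ∀ t, g t =ᵐ[μ] g' t := fun t =>
    (hg_nonneg t).mono fun ω hω => (max_eq_left hω).symm
  have hhe : ∀ t, h t =ᵐ[μ] h' t := fun t =>
    (hh_nonneg t).mono fun ω hω => (max_eq_left hω).symm
  have hrec' : ∀ t, ∀ᵐ ω ∂μ,
      (μ[z' (t + 1)|ℱ t]) ω ≤ (1 + f' t ω) * z' t ω + g' t ω - h' t ω := by
    intro t
    have hcz : μ[z' (t + 1)|ℱ t] =ᵐ[μ] μ[z (t + 1)|ℱ t] :=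
      condExp_congr_ae (hze (t + 1)).symm
    filter_upwards [hcz, hrec t, hze t, hfe t, hge t, hhe t] with ω e0 e1 e2 e3 e4 e5
    rw [e0, ← e2, ← e3, ← e4, ← e5]
    exact e1
  have main := RSaux.rs_aux ℱ z' f' g' h'
    (fun t ω => le_max_right _ _) (fun t ω => le_max_right _ _)
    (fun t ω => le_max_right _ _) (fun t ω => le_max_right _ _)
    hz'a hf'a hg'a hh'a hz'_int hrec'
  have heq : ∀ᵐ ω ∂μ, ∀ t, z t ω = z' t ω ∧ f t ω = f' t ω ∧ g t ω = g' t ω ∧ h t ω = h' t ω := by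
    refine ae_all_iff.2 fun t => ?_
    filter_upwards [hze t, hfe t, hge t, hhe t] with ω e1 e2 e3 e4
    exact ⟨e1, e2, e3, e4⟩
  filter_upwards [main, heq] with ω hmain heqω hsum
  have hfeq : (fun t => f' t ω) = fun t => f t ω := funext fun t => ((heqω t).2.1).symm
  have hgeq : (fun t => g' t ω) = fun t => g t ω := funext fun t => ((heqω t).2.2.1).symm
  have hheq : (fun t => h' t ω) = fun t => h t ω := funext fun t => ((heqω t).2.2.2).symm
  have hzeq : (fun t => z' t ω) = fun t => z t ω := funext fun t => ((heqω t).1).symm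
  obtain ⟨⟨l, hl⟩, hsum_h'⟩ := hmain (by rw [hfeq, hgeq]; exact hsum)
  refine ⟨⟨l, ?_⟩, ?_⟩
  · rw [← hzeq]; exact hl
  · rw [← hheq]; exact hsum_h'
end

section
/- Let (z_t), (f_t), (g_t), (h_t), (α_t) be nonnegative stochastic processes adapted to a filtration (F_t) with E[z_{t+1}|F_t] ≤ (1+f_t) z_t + g_t - α_t h_t a.s. for all t. Suppose Σ f_t < ∞ and Σ g_t < ∞ almost surely. Then (z_t) is bounded almost surely and converges almost surely to a random variable W. If additionally Σ α_t = ∞ almost surely, then liminf_{t→∞} h_t = 0 almost surely. -/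
open MeasureTheory Filter
open scoped Topology ENNReal NNReal
namespace SAConvAux

variable {Ω : Type*}

/-- Product `∏_{s<t} (1 + f s)`. -/
noncomputable def PP (f : ℕ → Ω → ℝ) (t : ℕ) (ω : Ω) : ℝ := ∏ s ∈ Finset.range t, (1 + f s ω)

/-- Indicator that the partial sums of `f` and `g` up to (excluding) `t` are `≤ n`. -/
noncomputable def chi (f g : ℕ → Ω → ℝ) (n : ℕ) (t : ℕ) (ω : Ω) : ℝ :=
  if (∑ s ∈ Finset.range t, f s ω) ≤ n ∧ (∑ s ∈ Finset.range t, g s ω) ≤ n then 1 else 0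

noncomputable def YY (z f g h α : ℕ → Ω → ℝ) (n t : ℕ) (ω : Ω) : ℝ :=
  chi f g n t ω * z t ω / PP f t ω +
    ∑ s ∈ Finset.range t, chi f g n (s + 1) ω * (α s ω * h s ω - g s ω) / PP f (s + 1) ω

variable {f g z h α : ℕ → Ω → ℝ} {n t : ℕ} {ω : Ω}

lemma one_le_PP (hf0 : ∀ s, 0 ≤ f s ω) : 1 ≤ PP f t ω := by
  unfold PP
  calc (1:ℝ) = ∏ _s ∈ Finset.range t, (1:ℝ) := by simp
    _ ≤ ∏ s ∈ Finset.range t, (1 + f s ω) :=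
      Finset.prod_le_prod (fun s _ => zero_le_one) (fun s _ => by linarith [hf0 s])

lemma PP_pos (hf0 : ∀ s, 0 ≤ f s ω) : 0 < PP f t ω := lt_of_lt_of_le one_pos (one_le_PP hf0)

lemma PP_succ : PP f (t + 1) ω = PP f t ω * (1 + f t ω) := Finset.prod_range_succ _ _

lemma chi_nonneg : 0 ≤ chi f g n t ω := by unfold chi; split <;> norm_num

lemma chi_le_one : chi f g n t ω ≤ 1 := by unfold chi; split <;> norm_num

lemma chi_succ_le (hf0 : ∀ s, 0 ≤ f s ω) (hg0 : ∀ s, 0 ≤ g s ω) :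
    chi f g n (t + 1) ω ≤ chi f g n t ω := by
  unfold chi
  by_cases h1 : (∑ s ∈ Finset.range (t + 1), f s ω) ≤ n ∧ (∑ s ∈ Finset.range (t + 1), g s ω) ≤ n
  · have h2 : (∑ s ∈ Finset.range t, f s ω) ≤ n ∧ (∑ s ∈ Finset.range t, g s ω) ≤ n :=
      ⟨le_trans (Finset.sum_le_sum_of_subset_of_nonneg
          (Finset.range_subset_range.2 (Nat.le_succ t)) fun i _ _ => hf0 i) h1.1,
        le_trans (Finset.sum_le_sum_of_subset_of_nonneg
          (Finset.range_subset_range.2 (Nat.le_succ t)) fun i _ _ => hg0 i) h1.2⟩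
    rw [if_pos h1, if_pos h2]
  · rw [if_neg h1]
    split <;> norm_num

lemma PP_le_exp (hf0 : ∀ s, 0 ≤ f s ω) (hle : (∑ s ∈ Finset.range t, f s ω) ≤ n) :
    PP f t ω ≤ Real.exp n := by
  calc PP f t ω ≤ ∏ s ∈ Finset.range t, Real.exp (f s ω) :=
        Finset.prod_le_prod (fun s _ => by linarith [hf0 s])
          (fun s _ => by linarith [Real.add_one_le_exp (f s ω)])
    _ = Real.exp (∑ s ∈ Finset.range t, f s ω) := by rw [Real.exp_sum]
    _ ≤ Real.exp n := Real.exp_le_exp.2 hle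

lemma sum_chi_g_le (hf0 : ∀ s, 0 ≤ f s ω) (hg0 : ∀ s, 0 ≤ g s ω) :
    ∑ s ∈ Finset.range t, chi f g n (s + 1) ω * g s ω ≤ n := by
  induction t with
  | zero => simp
  | succ t ih =>
    rw [Finset.sum_range_succ]
    by_cases hc : (∑ s ∈ Finset.range (t + 1), f s ω) ≤ n ∧
        (∑ s ∈ Finset.range (t + 1), g s ω) ≤ n
    · have h1 : ∑ s ∈ Finset.range t, chi f g n (s + 1) ω * g s ω ≤
          ∑ s ∈ Finset.range t, g s ω :=
        Finset.sum_le_sum fun s _ => by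
          nlinarith [chi_le_one (f := f) (g := g) (n := n) (t := s + 1) (ω := ω), hg0 s,
            chi_nonneg (f := f) (g := g) (n := n) (t := s + 1) (ω := ω)]
      have h2 : chi f g n (t + 1) ω * g t ω ≤ g t ω := by
        nlinarith [chi_le_one (f := f) (g := g) (n := n) (t := t + 1) (ω := ω), hg0 t,
          chi_nonneg (f := f) (g := g) (n := n) (t := t + 1) (ω := ω)]
      have := hc.2
      rw [Finset.sum_range_succ] at this
      linarith
    · have : chi f g n (t + 1) ω = 0 := by unfold chi; rw [if_neg hc]
      rw [this, zero_mul, add_zero]; exact ih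


section Meas

variable {m0 : MeasurableSpace Ω} {μ : Measure Ω} [IsProbabilityMeasure μ] {ℱ : Filtration ℕ m0}

lemma sumf_meas (hf : Adapted ℱ f) {t u : ℕ} (h : t ≤ u + 1) :
    Measurable[ℱ u] fun ω => ∑ s ∈ Finset.range t, f s ω := by
  refine Finset.measurable_sum _ fun s hs => ?_
  have hs' : s ≤ u := by
    have := Finset.mem_range.1 hs; omega
  exact ((hf s).mono (ℱ.mono hs') le_rfl)

lemma PP_meas (hf : Adapted ℱ f) {t u : ℕ} (h : t ≤ u + 1) :
    Measurable[ℱ u] (PP f t) := by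
  refine Finset.measurable_prod _ fun s hs => ?_
  have hs' : s ≤ u := by
    have := Finset.mem_range.1 hs; omega
  exact measurable_const.add ((hf s).mono (ℱ.mono hs') le_rfl)

lemma chi_meas (hf : Adapted ℱ f) (hg : Adapted ℱ g) {n t u : ℕ} (h : t ≤ u + 1) :
    Measurable[ℱ u] (chi f g n t) := by
  have hset : MeasurableSet[ℱ u] {ω | (∑ s ∈ Finset.range t, f s ω) ≤ (n:ℝ) ∧
      (∑ s ∈ Finset.range t, g s ω) ≤ (n:ℝ)} := by
    have h1 := measurableSet_le (sumf_meas hf h) ((measurable_const : Measurable[ℱ u] fun _ : Ω => (n:ℝ)))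
    have h2 := measurableSet_le (sumf_meas hg h) ((measurable_const : Measurable[ℱ u] fun _ : Ω => (n:ℝ)))
    exact h1.inter h2
  unfold chi
  exact Measurable.ite hset measurable_const measurable_const


lemma chi_cond {n : ℕ} {s : ℕ} {ω : Ω} (hf0 : ∀ u, 0 ≤ f u ω) (hg0 : ∀ u, 0 ≤ g u ω)
    (hne : chi f g n (s + 1) ω ≠ 0) : f s ω ≤ n ∧ g s ω ≤ n := by
  unfold chi at hne
  by_cases hc : (∑ u ∈ Finset.range (s + 1), f u ω) ≤ n ∧
      (∑ u ∈ Finset.range (s + 1), g u ω) ≤ n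
  · constructor
    · exact le_trans (Finset.single_le_sum (fun i _ => hf0 i) (Finset.self_mem_range_succ s)) hc.1
    · exact le_trans (Finset.single_le_sum (fun i _ => hg0 i) (Finset.self_mem_range_succ s)) hc.2
  · rw [if_neg hc] at hne; exact absurd rfl hne

lemma chi_eq_or {n t : ℕ} {ω : Ω} : chi f g n t ω = 0 ∨ chi f g n t ω = 1 := by
  unfold chi; split <;> simp

section Main

variable (hz0 : ∀ t ω, 0 ≤ z t ω) (hf0 : ∀ t ω, 0 ≤ f t ω) (hg0 : ∀ t ω, 0 ≤ g t ω)
  (hh0 : ∀ t ω, 0 ≤ h t ω) (hα0 : ∀ t ω, 0 ≤ α t ω)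
  (hz_adapted : Adapted ℱ z) (hf_adapted : Adapted ℱ f)
  (hg_adapted : Adapted ℱ g) (hh_adapted : Adapted ℱ h) (hα_adapted : Adapted ℱ α)
  (hz_int : ∀ t, Integrable (z t) μ)
  (hrec : ∀ t, ∀ᵐ ω ∂μ,
      (μ[z (t + 1)|ℱ t]) ω ≤ (1 + f t ω) * z t ω + g t ω - α t ω * h t ω)

include hz0 hrec in
lemma ah_le (s : ℕ) : ∀ᵐ ω ∂μ, α s ω * h s ω ≤ (1 + f s ω) * z s ω + g s ω := by
  have hnn : 0 ≤ᵐ[μ] μ[z (s + 1)|ℱ s] := condExp_nonneg (ae_of_all _ fun ω => hz0 (s + 1) ω)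
  filter_upwards [hrec s, hnn] with ω h1 h2
  simp only [Pi.zero_apply] at h2
  linarith

include hz0 hf0 hg0 hh0 hα0 hz_adapted hf_adapted hg_adapted hh_adapted hα_adapted hz_int hrec in
lemma term_int (n s : ℕ) :
    Integrable (fun ω => chi f g n (s + 1) ω * (α s ω * h s ω - g s ω) / PP f (s + 1) ω) μ := by
  have hdom : Integrable (fun ω => (1 + (n : ℝ)) * z s ω + 2 * n) μ :=
    ((hz_int s).const_mul _).add (integrable_const _)
  refine hdom.mono' ?_ ?_
  · have hm : Measurable[ℱ s] fun ω =>
        chi f g n (s + 1) ω * (α s ω * h s ω - g s ω) / PP f (s + 1) ω :=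
      ((chi_meas hf_adapted hg_adapted le_rfl).mul
        (((hα_adapted s).mul (hh_adapted s)).sub
          (hg_adapted s))).div (PP_meas hf_adapted le_rfl)
    exact (hm.mono (ℱ.le s) le_rfl).aestronglyMeasurable
  · filter_upwards [ah_le hz0 hrec s] with ω hω
    rcases chi_eq_or (f := f) (g := g) (n := n) (t := s + 1) (ω := ω) with hc | hc
    · rw [hc]
      simp only [zero_mul, zero_div, norm_zero]
      nlinarith [hz0 s ω, (Nat.cast_nonneg n : (0:ℝ) ≤ n)]
    · obtain ⟨hfn, hgn⟩ := chi_cond (fun u => hf0 u ω) (fun u => hg0 u ω) (by rw [hc]; norm_num)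
      rw [hc, one_mul, Real.norm_eq_abs, abs_div,
        abs_of_nonneg (le_trans zero_le_one (one_le_PP fun u => hf0 u ω))]
      have h1 : |α s ω * h s ω - g s ω| / PP f (s + 1) ω ≤ |α s ω * h s ω - g s ω| :=
        div_le_self (abs_nonneg _) (one_le_PP fun u => hf0 u ω)
      have h2 : |α s ω * h s ω - g s ω| ≤ (1 + (n : ℝ)) * z s ω + 2 * n := by
        rw [abs_le]
        constructor
        · nlinarith [hz0 s ω, mul_nonneg (hα0 s ω) (hh0 s ω)]
        · nlinarith [hz0 s ω, hg0 s ω]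
      linarith

include hz0 hf0 hg0 hh0 hα0 hz_adapted hf_adapted hg_adapted hh_adapted hα_adapted hz_int hrec in
lemma YY_int (n t : ℕ) : Integrable (YY z f g h α n t) μ := by
  unfold YY
  refine Integrable.add ?_ (integrable_finset_sum _ fun s _ =>
    term_int hz0 hf0 hg0 hh0 hα0 hz_adapted hf_adapted hg_adapted hh_adapted hα_adapted
      hz_int hrec n s)
  refine (hz_int t).mono' ?_ ?_
  · have hm : Measurable[ℱ t] fun ω => chi f g n t ω * z t ω / PP f t ω :=
      ((chi_meas hf_adapted hg_adapted (Nat.le_succ t)).mul (hz_adapted t)).div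
        (PP_meas hf_adapted (Nat.le_succ t))
    exact (hm.mono (ℱ.le t) le_rfl).aestronglyMeasurable
  · refine ae_of_all _ fun ω => ?_
    have hP := one_le_PP (f := f) (t := t) (ω := ω) fun u => hf0 u ω
    have h1 : chi f g n t ω * z t ω / PP f t ω ≤ chi f g n t ω * z t ω :=
      div_le_self (mul_nonneg chi_nonneg (hz0 t ω)) hP
    have h2 : chi f g n t ω * z t ω ≤ z t ω := by
      nlinarith [chi_le_one (f := f) (g := g) (n := n) (t := t) (ω := ω), hz0 t ω,
        chi_nonneg (f := f) (g := g) (n := n) (t := t) (ω := ω)]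
    rw [Real.norm_eq_abs,
      abs_of_nonneg (div_nonneg (mul_nonneg chi_nonneg (hz0 t ω)) (by linarith))]
    linarith

include hz_adapted hf_adapted hg_adapted hh_adapted hα_adapted in
lemma YY_adapted (n : ℕ) : Adapted ℱ (YY z f g h α n) := by
  intro t
  have hm : ∀ (w : ℕ → Ω → ℝ), Adapted ℱ w → ∀ s, s ≤ t → Measurable[ℱ t] (w s) :=
    fun w hw s hs => ((hw s).mono (ℱ.mono hs) le_rfl)
  unfold YY
  refine Measurable.add (((chi_meas hf_adapted hg_adapted (Nat.le_succ t)).mul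
    (hz_adapted t)).div (PP_meas hf_adapted (Nat.le_succ t))) ?_
  refine Finset.measurable_sum _ fun s hs => ?_
  have hs' : s + 1 ≤ t := Finset.mem_range.1 hs
  have hs'' : s ≤ t := by omega
  exact ((chi_meas hf_adapted hg_adapted (by omega)).mul
    (((hm α hα_adapted s hs'').mul (hm h hh_adapted s hs'')).sub
      (hm g hg_adapted s hs''))).div (PP_meas hf_adapted (by omega))

include hz0 hf0 hg0 hh0 hα0 hz_adapted hf_adapted hg_adapted hh_adapted hα_adapted hz_int hrec in
lemma YY_supermartingale (n : ℕ) : Supermartingale (YY z f g h α n) ℱ μ := by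
  refine supermartingale_nat
    (YY_adapted hz_adapted hf_adapted hg_adapted hh_adapted hα_adapted n).stronglyAdapted
    (fun t => YY_int hz0 hf0 hg0 hh0 hα0 hz_adapted hf_adapted hg_adapted hh_adapted hα_adapted
      hz_int hrec n t) fun t => ?_
  set u : Ω → ℝ := fun ω => chi f g n (t + 1) ω / PP f (t + 1) ω with hu
  set R : Ω → ℝ := fun ω => ∑ s ∈ Finset.range (t + 1),
      chi f g n (s + 1) ω * (α s ω * h s ω - g s ω) / PP f (s + 1) ω with hR
  have hu_sm : StronglyMeasurable[ℱ t] u :=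
    ((chi_meas hf_adapted hg_adapted le_rfl).div (PP_meas hf_adapted le_rfl)).stronglyMeasurable
  have hu_nonneg : ∀ ω, 0 ≤ u ω := fun ω =>
    div_nonneg chi_nonneg (PP_pos fun s => hf0 s ω).le
  have hu_le_one : ∀ ω, u ω ≤ 1 := fun ω =>
    div_le_one_of_le₀ (le_trans chi_le_one (one_le_PP fun s => hf0 s ω))
      (PP_pos fun s => hf0 s ω).le
  have hu_bd : ∀ᵐ ω ∂μ, ‖u ω‖ ≤ 1 := ae_of_all _ fun ω => by
    rw [Real.norm_eq_abs, abs_of_nonneg (hu_nonneg ω)]; exact hu_le_one ω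
  have huz_int : Integrable (u * z (t + 1)) μ := by
    refine (hz_int (t + 1)).mono' ?_ ?_
    · exact ((hu_sm.mono (ℱ.le t)).aestronglyMeasurable.mul
        (hz_int (t + 1)).aestronglyMeasurable)
    · refine ae_of_all _ fun ω => ?_
      simp only [Pi.mul_apply, Real.norm_eq_abs]
      rw [abs_mul, abs_of_nonneg (hu_nonneg ω), abs_of_nonneg (hz0 (t + 1) ω)]
      nlinarith [hz0 (t + 1) ω, hu_nonneg ω, hu_le_one ω]
  have hR_sm : StronglyMeasurable[ℱ t] R := by
    refine Measurable.stronglyMeasurable ?_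
    refine Finset.measurable_sum _ fun s hs => ?_
    have hs' : s ≤ t := by have := Finset.mem_range.1 hs; omega
    exact ((chi_meas hf_adapted hg_adapted (by omega)).mul
      ((((hα_adapted s).mono (ℱ.mono hs') le_rfl).mul
        ((hh_adapted s).mono (ℱ.mono hs') le_rfl)).sub
        ((hg_adapted s).mono (ℱ.mono hs') le_rfl))).div (PP_meas hf_adapted (by omega))
  have hR_int : Integrable R μ := integrable_finset_sum _ fun s _ =>
    term_int hz0 hf0 hg0 hh0 hα0 hz_adapted hf_adapted hg_adapted hh_adapted hα_adapted
      hz_int hrec n s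
  have hYsplit : YY z f g h α n (t + 1) = u * z (t + 1) + R := by
    funext ω
    simp only [YY, Pi.add_apply, Pi.mul_apply, hu, hR]
    ring
  have h1 : μ[YY z f g h α n (t + 1)|ℱ t] =ᵐ[μ] μ[u * z (t + 1)|ℱ t] + μ[R|ℱ t] := by
    rw [hYsplit]; exact condExp_add huz_int hR_int _
  have h2 : μ[u * z (t + 1)|ℱ t] =ᵐ[μ] u * μ[z (t + 1)|ℱ t] :=
    condExp_stronglyMeasurable_mul_of_bound (ℱ.le t) hu_sm (hz_int (t + 1)) 1 hu_bd
  have h3 : μ[R|ℱ t] = R := condExp_of_stronglyMeasurable (ℱ.le t) hR_sm hR_int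
  filter_upwards [h1, h2, hrec t] with ω hω1 hω2 hrecω
  rw [hω1]
  simp only [Pi.add_apply, h3]
  rw [hω2]
  simp only [Pi.mul_apply]
  have hu0 := hu_nonneg ω
  have step1 : u ω * (μ[z (t + 1)|ℱ t]) ω ≤
      u ω * ((1 + f t ω) * z t ω + g t ω - α t ω * h t ω) :=
    mul_le_mul_of_nonneg_left hrecω hu0
  have hPt : (0:ℝ) < PP f t ω := PP_pos fun s => hf0 s ω
  have h1f : (0:ℝ) < 1 + f t ω := by linarith [hf0 t ω]
  have hq : PP f (t + 1) ω = PP f t ω * (1 + f t ω) := PP_succ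
  have hkey : u ω * ((1 + f t ω) * z t ω + g t ω - α t ω * h t ω) +
      chi f g n (t + 1) ω * (α t ω * h t ω - g t ω) / PP f (t + 1) ω =
      chi f g n (t + 1) ω * z t ω / PP f t ω := by
    rw [hu]
    simp only []
    rw [hq]
    field_simp
    ring
  have hRω : R ω = (∑ s ∈ Finset.range t,
      chi f g n (s + 1) ω * (α s ω * h s ω - g s ω) / PP f (s + 1) ω) +
      chi f g n (t + 1) ω * (α t ω * h t ω - g t ω) / PP f (t + 1) ω := by
    rw [hR]; exact Finset.sum_range_succ _ t
  have hYt : YY z f g h α n t ω = chi f g n t ω * z t ω / PP f t ω +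
      ∑ s ∈ Finset.range t, chi f g n (s + 1) ω * (α s ω * h s ω - g s ω) / PP f (s + 1) ω :=
    rfl
  have hle : chi f g n (t + 1) ω * z t ω / PP f t ω ≤ chi f g n t ω * z t ω / PP f t ω :=
    (div_le_div_iff_of_pos_right hPt).2 (mul_le_mul_of_nonneg_right
      (chi_succ_le (fun s => hf0 s ω) (fun s => hg0 s ω)) (hz0 t ω))
  rw [hRω, hYt]
  linarith [step1, hkey, hle]

lemma YY_lb (hz0' : ∀ t, 0 ≤ z t ω) (hf0' : ∀ t, 0 ≤ f t ω) (hg0' : ∀ t, 0 ≤ g t ω)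
    (hh0' : ∀ t, 0 ≤ h t ω) (hα0' : ∀ t, 0 ≤ α t ω) {n t : ℕ} :
    -(n : ℝ) ≤ YY z f g h α n t ω := by
  unfold YY
  have h1 : 0 ≤ chi f g n t ω * z t ω / PP f t ω :=
    div_nonneg (mul_nonneg chi_nonneg (hz0' t)) (PP_pos hf0').le
  have h2 : ∀ s ∈ Finset.range t, -(chi f g n (s + 1) ω * g s ω) ≤
      chi f g n (s + 1) ω * (α s ω * h s ω - g s ω) / PP f (s + 1) ω := by
    intro s _
    have hc0 : (0:ℝ) ≤ chi f g n (s + 1) ω := chi_nonneg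
    have hP : (1:ℝ) ≤ PP f (s + 1) ω := one_le_PP hf0'
    have hstep : -(chi f g n (s + 1) ω * g s ω) / PP f (s + 1) ω ≤
        chi f g n (s + 1) ω * (α s ω * h s ω - g s ω) / PP f (s + 1) ω := by
      apply (div_le_div_iff_of_pos_right (by linarith : (0:ℝ) < PP f (s + 1) ω)).2
      nlinarith [mul_nonneg (hα0' s) (hh0' s)]
    refine le_trans ?_ hstep
    rw [neg_div]
    apply neg_le_neg
    exact div_le_self (mul_nonneg hc0 (hg0' s)) hP
  have h3 : -(n:ℝ) ≤ ∑ s ∈ Finset.range t,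
      chi f g n (s + 1) ω * (α s ω * h s ω - g s ω) / PP f (s + 1) ω := by
    calc -(n:ℝ) ≤ -∑ s ∈ Finset.range t, chi f g n (s + 1) ω * g s ω :=
          neg_le_neg (sum_chi_g_le hf0' hg0')
      _ = ∑ s ∈ Finset.range t, -(chi f g n (s + 1) ω * g s ω) := by
          rw [Finset.sum_neg_distrib]
      _ ≤ _ := Finset.sum_le_sum h2
  linarith

include hz0 hf0 hg0 hh0 hα0 hz_adapted hf_adapted hg_adapted hh_adapted hα_adapted hz_int hrec in
lemma YY_tendsto (n : ℕ) :
    ∀ᵐ ω ∂μ, ∃ c, Tendsto (fun t => YY z f g h α n t ω) atTop (𝓝 c) := by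
  have hsup := YY_supermartingale hz0 hf0 hg0 hh0 hα0 hz_adapted hf_adapted hg_adapted
    hh_adapted hα_adapted hz_int hrec (n := n)
  have hint : ∀ t, Integrable (YY z f g h α n t) μ := fun t =>
    YY_int hz0 hf0 hg0 hh0 hα0 hz_adapted hf_adapted hg_adapted hh_adapted hα_adapted
      hz_int hrec n t
  have hY0 : YY z f g h α n 0 = z 0 := by
    funext ω
    simp [YY, chi, PP, Nat.cast_nonneg]
  have hlb : ∀ t ω, -(n:ℝ) ≤ YY z f g h α n t ω := fun t ω =>
    YY_lb (fun t => hz0 t ω) (fun t => hf0 t ω) (fun t => hg0 t ω) (fun t => hh0 t ω)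
      (fun t => hα0 t ω)
  have hmean : ∀ t, ∫ ω, YY z f g h α n t ω ∂μ ≤ ∫ ω, z 0 ω ∂μ := by
    intro t
    have hce : μ[YY z f g h α n t|ℱ 0] ≤ᵐ[μ] YY z f g h α n 0 := hsup.2.1 0 t (Nat.zero_le t)
    calc ∫ ω, YY z f g h α n t ω ∂μ = ∫ ω, (μ[YY z f g h α n t|ℱ 0]) ω ∂μ :=
          (integral_condExp (ℱ.le 0)).symm
      _ ≤ ∫ ω, YY z f g h α n 0 ω ∂μ := integral_mono_ae integrable_condExp (hint 0) hce
      _ = ∫ ω, z 0 ω ∂μ := by rw [hY0]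
  set Rb : ℝ≥0∞ := ENNReal.ofReal (∫ ω, z 0 ω ∂μ + 2 * n) with hRb
  have hbdd : ∀ t, eLpNorm (YY z f g h α n t) 1 μ ≤ Rb := by
    intro t
    have hint2 : Integrable (fun ω => YY z f g h α n t ω + 2 * n) μ :=
      (hint t).add (integrable_const _)
    calc eLpNorm (YY z f g h α n t) 1 μ ≤ eLpNorm (fun ω => YY z f g h α n t ω + 2 * n) 1 μ := by
          refine eLpNorm_mono_ae (ae_of_all _ fun ω => ?_)
          have := hlb t ω
          rw [Real.norm_eq_abs, Real.norm_eq_abs]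
          rw [abs_le]
          have hn : (0:ℝ) ≤ n := Nat.cast_nonneg n
          have habs : |YY z f g h α n t ω + 2 * n| = YY z f g h α n t ω + 2 * n :=
            abs_of_nonneg (by linarith)
          constructor <;> rw [habs] <;> linarith
      _ = ENNReal.ofReal (∫ ω, ‖YY z f g h α n t ω + 2 * n‖ ∂μ) := by
          rw [eLpNorm_one_eq_lintegral_enorm,
            ← ofReal_integral_norm_eq_lintegral_enorm hint2]
      _ ≤ Rb := by
          rw [hRb]
          apply ENNReal.ofReal_le_ofReal
          have : ∫ ω, ‖YY z f g h α n t ω + 2 * n‖ ∂μ = ∫ ω, YY z f g h α n t ω + 2 * n ∂μ := by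
            refine integral_congr_ae (ae_of_all _ fun ω => ?_)
            simp only [Real.norm_eq_abs]
            rw [abs_of_nonneg]
            have := hlb t ω
            have hn : (0:ℝ) ≤ n := Nat.cast_nonneg n
            linarith
          rw [this, integral_add (hint t) (integrable_const _), integral_const]
          simp only [probReal_univ, measure_univ, ENNReal.toReal_one, smul_eq_mul, one_mul]
          linarith [hmean t]
  have hsub := hsup.neg
  have hbdd' : ∀ t, eLpNorm ((-(YY z f g h α n)) t) 1 μ ≤ Rb := by
    intro t
    have : (-(YY z f g h α n)) t = -(YY z f g h α n t) := rfl
    rw [this, eLpNorm_neg]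
    exact hbdd t
  have := hsub.exists_ae_tendsto_of_bdd hbdd'
  filter_upwards [this] with ω ⟨c, hc⟩
  exact ⟨-c, by simpa using hc.neg⟩

include hz0 hf0 hg0 hh0 hα0 hz_adapted hf_adapted hg_adapted hh_adapted hα_adapted hz_int hrec in
lemma key : ∀ᵐ ω ∂μ, Summable (fun t => f t ω) → Summable (fun t => g t ω) →
    (∃ L, Tendsto (fun t => z t ω) atTop (𝓝 L)) ∧ Summable (fun t => α t ω * h t ω) := by
  have hall : ∀ᵐ ω ∂μ, ∀ n : ℕ, ∃ c, Tendsto (fun t => YY z f g h α n t ω) atTop (𝓝 c) :=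
    ae_all_iff.2 fun n => YY_tendsto hz0 hf0 hg0 hh0 hα0 hz_adapted hf_adapted hg_adapted
      hh_adapted hα_adapted hz_int hrec n
  filter_upwards [hall] with ω hω hfs hgs
  set n : ℕ := ⌈max (∑' t, f t ω) (∑' t, g t ω)⌉₊ with hn
  have hfn : (∑' t, f t ω) ≤ n := le_trans (le_max_left _ _) (Nat.le_ceil _)
  have hgn : (∑' t, g t ω) ≤ n := le_trans (le_max_right _ _) (Nat.le_ceil _)
  obtain ⟨c, hc⟩ := hω n
  have hf0' : ∀ s, 0 ≤ f s ω := fun s => hf0 s ω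
  have hg0' : ∀ s, 0 ≤ g s ω := fun s => hg0 s ω
  have hχ1 : ∀ t, chi f g n t ω = 1 := by
    intro t
    unfold chi
    rw [if_pos ⟨le_trans (Summable.sum_le_tsum (Finset.range t) (fun i _ => hf0' i) hfs) hfn,
      le_trans (Summable.sum_le_tsum (Finset.range t) (fun i _ => hg0' i) hgs) hgn⟩]
  have hYeq : ∀ t, YY z f g h α n t ω = z t ω / PP f t ω +
      ∑ s ∈ Finset.range t, (α s ω * h s ω - g s ω) / PP f (s + 1) ω := by
    intro t
    simp only [YY, hχ1, one_mul]
  set p : ℕ → ℝ := fun t => PP f t ω with hp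
  have hp1 : ∀ t, 1 ≤ p t := fun t => one_le_PP hf0'
  have hppos : ∀ t, (0:ℝ) < p t := fun t => lt_of_lt_of_le one_pos (hp1 t)
  have hpmono : Monotone p := monotone_nat_of_le_succ fun t => by
    have : p (t + 1) = p t * (1 + f t ω) := PP_succ
    nlinarith [hf0' t, hppos t]
  have hpbd : ∀ t, p t ≤ Real.exp n := fun t =>
    PP_le_exp hf0' (le_trans (Summable.sum_le_tsum (Finset.range t) (fun i _ => hf0' i) hfs) hfn)
  have hpBdd : BddAbove (Set.range p) := ⟨Real.exp n, by
    rintro x ⟨t, rfl⟩; exact hpbd t⟩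
  have hplim : Tendsto p atTop (𝓝 (⨆ t, p t)) := tendsto_atTop_ciSup hpmono hpBdd
  set pL : ℝ := ⨆ t, p t with hpL
  have hpL1 : (1:ℝ) ≤ pL := le_trans (hp1 0) (le_ciSup hpBdd 0)
  have hgp_sum : Summable (fun s => g s ω / p (s + 1)) :=
    Summable.of_nonneg_of_le (fun s => div_nonneg (hg0' s) (hppos _).le)
      (fun s => div_le_self (hg0' s) (hp1 _)) hgs
  have hSg : Tendsto (fun t => ∑ s ∈ Finset.range t, g s ω / p (s + 1)) atTop
      (𝓝 (∑' s, g s ω / p (s + 1))) := hgp_sum.hasSum.tendsto_sum_nat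
  set A : ℕ → ℝ := fun s => α s ω * h s ω / p (s + 1) with hA
  have hA0 : ∀ s, 0 ≤ A s := fun s =>
    div_nonneg (mul_nonneg (hα0 s ω) (hh0 s ω)) (hppos _).le
  have hrel : ∀ t, ∑ s ∈ Finset.range t, A s = YY z f g h α n t ω - z t ω / p t +
      ∑ s ∈ Finset.range t, g s ω / p (s + 1) := by
    intro t
    rw [hYeq t]
    have : ∀ s ∈ Finset.range t, (α s ω * h s ω - g s ω) / PP f (s + 1) ω =
        A s - g s ω / p (s + 1) := fun s _ => by rw [hA, hp]; rw [sub_div]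
    rw [Finset.sum_congr rfl this, Finset.sum_sub_distrib]
    ring
  obtain ⟨B, hB⟩ : ∃ B, ∀ t, YY z f g h α n t ω ≤ B := by
    obtain ⟨B, hB⟩ := hc.bddAbove_range
    exact ⟨B, fun t => hB ⟨t, rfl⟩⟩
  have hA_bdd : ∀ t, ∑ s ∈ Finset.range t, A s ≤ B + ∑' s, g s ω / p (s + 1) := by
    intro t
    have h1 : z t ω / p t ≥ 0 := div_nonneg (hz0 t ω) (hppos t).le
    have h2 : ∑ s ∈ Finset.range t, g s ω / p (s + 1) ≤ ∑' s, g s ω / p (s + 1) :=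
      Summable.sum_le_tsum _ (fun i _ => div_nonneg (hg0' i) (hppos _).le) hgp_sum
    linarith [hrel t, hB t]
  have hA_sum : Summable A := summable_of_sum_range_le hA0 hA_bdd
  have hSA : Tendsto (fun t => ∑ s ∈ Finset.range t, A s) atTop (𝓝 (∑' s, A s)) :=
    hA_sum.hasSum.tendsto_sum_nat
  have hz_div : Tendsto (fun t => z t ω / p t) atTop
      (𝓝 (c - ∑' s, A s + ∑' s, g s ω / p (s + 1))) := by
    refine Tendsto.congr (fun t => ?_) ((hc.sub hSA).add hSg)
    linarith [hrel t]
  have hzlim : Tendsto (fun t => z t ω) atTop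
      (𝓝 ((c - ∑' s, A s + ∑' s, g s ω / p (s + 1)) * pL)) := by
    refine Tendsto.congr (fun t => ?_) (hz_div.mul hplim)
    exact div_mul_cancel₀ _ (ne_of_gt (hppos t))
  refine ⟨⟨_, hzlim⟩, ?_⟩
  refine Summable.of_nonneg_of_le (fun s => mul_nonneg (hα0 s ω) (hh0 s ω))
    (fun s => ?_) (hA_sum.mul_left (Real.exp n))
  calc α s ω * h s ω = A s * p (s + 1) := (div_mul_cancel₀ _ (ne_of_gt (hppos _))).symm
    _ ≤ A s * Real.exp n := mul_le_mul_of_nonneg_left (hpbd _) (hA0 s)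
    _ = Real.exp n * A s := mul_comm _ _

end Main

end Meas

end SAConvAux


/-- Theorem 4.2, items 1–2: under the almost-supermartingale recursion with
`Σ f_t < ∞` and `Σ g_t < ∞` a.s., `(z_t)` is bounded a.s. and converges a.s. to a
random variable `W`; if in addition `Σ α_t = ∞` a.s., then `liminf h_t = 0` a.s. -/
theorem sa_convergence_thm {Ω : Type*} {m0 : MeasurableSpace Ω}
    {μ : Measure Ω} [IsProbabilityMeasure μ]
    (ℱ : Filtration ℕ m0)
    (z f g h α : ℕ → Ω → ℝ)
    (hz_nonneg : ∀ t, ∀ᵐ ω ∂μ, 0 ≤ z t ω)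
    (hf_nonneg : ∀ t, ∀ᵐ ω ∂μ, 0 ≤ f t ω)
    (hg_nonneg : ∀ t, ∀ᵐ ω ∂μ, 0 ≤ g t ω)
    (hh_nonneg : ∀ t, ∀ᵐ ω ∂μ, 0 ≤ h t ω)
    (hα_nonneg : ∀ t, ∀ᵐ ω ∂μ, 0 ≤ α t ω)
    (hz_adapted : Adapted ℱ z) (hf_adapted : Adapted ℱ f)
    (hg_adapted : Adapted ℱ g) (hh_adapted : Adapted ℱ h)
    (hα_adapted : Adapted ℱ α)
    (hz_int : ∀ t, Integrable (z t) μ)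
    (hrec : ∀ t, ∀ᵐ ω ∂μ,
      (μ[z (t + 1)|ℱ t]) ω ≤ (1 + f t ω) * z t ω + g t ω - α t ω * h t ω)
    (hf_sum : ∀ᵐ ω ∂μ, Summable (fun t => f t ω))
    (hg_sum : ∀ᵐ ω ∂μ, Summable (fun t => g t ω)) :
    ((∀ᵐ ω ∂μ, ∃ C : ℝ, ∀ t, z t ω ≤ C) ∧
      ∃ W : Ω → ℝ, ∀ᵐ ω ∂μ, Tendsto (fun t => z t ω) atTop (nhds (W ω))) ∧
    ((∀ᵐ ω ∂μ, ¬ Summable (fun t => α t ω)) →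
      ∀ᵐ ω ∂μ, Filter.liminf (fun t => h t ω) atTop = 0) := by
  classical
  -- normalized (pointwise nonnegative) versions
  set z' : ℕ → Ω → ℝ := fun t ω => max (z t ω) 0 with hz'
  set f' : ℕ → Ω → ℝ := fun t ω => max (f t ω) 0 with hf'
  set g' : ℕ → Ω → ℝ := fun t ω => max (g t ω) 0 with hg'
  set h' : ℕ → Ω → ℝ := fun t ω => max (h t ω) 0 with hh'
  set α' : ℕ → Ω → ℝ := fun t ω => max (α t ω) 0 with hα'
  have hz0 : ∀ t ω, 0 ≤ z' t ω := fun t ω => le_max_right _ _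
  have hf0 : ∀ t ω, 0 ≤ f' t ω := fun t ω => le_max_right _ _
  have hg0 : ∀ t ω, 0 ≤ g' t ω := fun t ω => le_max_right _ _
  have hh0 : ∀ t ω, 0 ≤ h' t ω := fun t ω => le_max_right _ _
  have hα0 : ∀ t ω, 0 ≤ α' t ω := fun t ω => le_max_right _ _
  have hze : ∀ t, z' t =ᵐ[μ] z t := fun t => (hz_nonneg t).mono fun ω hω => max_eq_left hω
  have hfe : ∀ t, f' t =ᵐ[μ] f t := fun t => (hf_nonneg t).mono fun ω hω => max_eq_left hω
  have hge : ∀ t, g' t =ᵐ[μ] g t := fun t => (hg_nonneg t).mono fun ω hω => max_eq_left hω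
  have hhe : ∀ t, h' t =ᵐ[μ] h t := fun t => (hh_nonneg t).mono fun ω hω => max_eq_left hω
  have hαe : ∀ t, α' t =ᵐ[μ] α t := fun t => (hα_nonneg t).mono fun ω hω => max_eq_left hω
  have hz'_ad : Adapted ℱ z' := fun t => ((hz_adapted t).max measurable_const)
  have hf'_ad : Adapted ℱ f' := fun t => ((hf_adapted t).max measurable_const)
  have hg'_ad : Adapted ℱ g' := fun t => ((hg_adapted t).max measurable_const)
  have hh'_ad : Adapted ℱ h' := fun t => ((hh_adapted t).max measurable_const)
  have hα'_ad : Adapted ℱ α' := fun t => ((hα_adapted t).max measurable_const)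
  have hz'_int : ∀ t, Integrable (z' t) μ := fun t => (hz_int t).pos_part
  have hrec' : ∀ t, ∀ᵐ ω ∂μ, (μ[z' (t + 1)|ℱ t]) ω ≤
      (1 + f' t ω) * z' t ω + g' t ω - α' t ω * h' t ω := by
    intro t
    have hce : μ[z' (t + 1)|ℱ t] =ᵐ[μ] μ[z (t + 1)|ℱ t] := condExp_congr_ae (hze (t + 1))
    filter_upwards [hrec t, hce, hze t, hfe t, hge t, hhe t, hαe t] with ω h1 h2 h3 h4 h5 h6 h7
    rw [h2, h3, h4, h5, h6, h7]
    exact h1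
  have hkey := SAConvAux.key hz0 hf0 hg0 hh0 hα0 hz'_ad hf'_ad hg'_ad hh'_ad hα'_ad
    hz'_int hrec'
  have hzeA : ∀ᵐ ω ∂μ, ∀ t, z' t ω = z t ω := ae_all_iff.2 fun t => hze t
  have hfeA : ∀ᵐ ω ∂μ, ∀ t, f' t ω = f t ω := ae_all_iff.2 fun t => hfe t
  have hgeA : ∀ᵐ ω ∂μ, ∀ t, g' t ω = g t ω := ae_all_iff.2 fun t => hge t
  have hheA : ∀ᵐ ω ∂μ, ∀ t, h' t ω = h t ω := ae_all_iff.2 fun t => hhe t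
  have hαeA : ∀ᵐ ω ∂μ, ∀ t, α' t ω = α t ω := ae_all_iff.2 fun t => hαe t
  have hmain : ∀ᵐ ω ∂μ, (∃ L, Tendsto (fun t => z t ω) atTop (𝓝 L)) ∧
      Summable (fun t => α t ω * h t ω) := by
    filter_upwards [hkey, hf_sum, hg_sum, hzeA, hfeA, hgeA, hheA, hαeA] with
      ω hk hfs hgs hzω hfω hgω hhω hαω
    have hfs' : Summable (fun t => f' t ω) := hfs.congr fun t => (hfω t).symm
    have hgs' : Summable (fun t => g' t ω) := hgs.congr fun t => (hgω t).symm
    obtain ⟨⟨L, hL⟩, hsum⟩ := hk hfs' hgs'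
    refine ⟨⟨L, hL.congr fun t => hzω t⟩, hsum.congr fun t => by rw [hαω t, hhω t]⟩
  refine ⟨⟨?_, ?_⟩, ?_⟩
  · filter_upwards [hmain] with ω ⟨⟨L, hL⟩, _⟩
    obtain ⟨C, hC⟩ := hL.bddAbove_range
    exact ⟨C, fun t => hC ⟨t, rfl⟩⟩
  · refine ⟨fun ω => limUnder atTop (fun t => z t ω), ?_⟩
    filter_upwards [hmain] with ω ⟨⟨L, hL⟩, _⟩
    rw [hL.limUnder_eq]
    exact hL
  · intro hαs
    have hh0A : ∀ᵐ ω ∂μ, ∀ t, 0 ≤ h t ω := ae_all_iff.2 hh_nonneg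
    have hα0A : ∀ᵐ ω ∂μ, ∀ t, 0 ≤ α t ω := ae_all_iff.2 hα_nonneg
    filter_upwards [hmain, hαs, hh0A, hα0A] with ω hm hns hh0' hα0'
    have hsum := hm.2
    have hfreq : ∀ ε : ℝ, 0 < ε → ∃ᶠ t in atTop, h t ω < ε := by
      intro ε hε
      by_contra hcon
      rw [not_frequently] at hcon
      obtain ⟨N, hN⟩ := eventually_atTop.1 hcon
      have hαsum : Summable (fun t => α (t + N) ω) := by
        refine Summable.of_nonneg_of_le (fun t => hα0' _) (fun t => ?_)
          (((summable_nat_add_iff N).2 hsum).mul_left ε⁻¹)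
        have hh := hN (t + N) (Nat.le_add_left N t)
        push_neg at hh
        have hα := hα0' (t + N)
        calc α (t + N) ω = ε⁻¹ * (ε * α (t + N) ω) := by field_simp
          _ ≤ ε⁻¹ * (α (t + N) ω * h (t + N) ω) := by
              refine mul_le_mul_of_nonneg_left ?_ (inv_nonneg.2 hε.le)
              nlinarith
      exact hns ((summable_nat_add_iff N).1 hαsum)
    have hbdd : IsBoundedUnder (· ≥ ·) atTop (fun t => h t ω) :=
      isBoundedUnder_of ⟨0, fun t => hh0' t⟩
    have hcob : IsCoboundedUnder (· ≥ ·) atTop (fun t => h t ω) :=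
      IsCoboundedUnder.of_frequently_le ((hfreq 1 one_pos).mono fun t ht => ht.le)
    have h1 : liminf (fun t => h t ω) atTop ≤ 0 := by
      refine le_of_forall_pos_le_add fun ε hε => ?_
      have := liminf_le_of_frequently_le ((hfreq ε hε).mono fun t ht => ht.le) hbdd
      linarith
    have h2 : (0:ℝ) ≤ liminf (fun t => h t ω) atTop :=
      le_liminf_of_le hcob (Eventually.of_forall fun t => hh0' t)
    exact le_antisymm h1 h2
end

section
/- Let (z_t), (f_t), (g_t), (h_t), (α_t) be nonnegative adapted processes with E[z_{t+1}|F_t] ≤ (1+f_t) z_t + g_t - α_t h_t a.s., Σ f_t < ∞ a.s., Σ g_t < ∞ a.s., and Σ α_t = ∞ a.s. Suppose there is a Class B function η : ℝ₊ → ℝ₊ with h_t ≥ η(z_t) a.s. for all t. Then z_t → 0 almost surely as t → ∞. -/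
open MeasureTheory Filter
open scoped NNReal ENNReal

def ClassB (η : ℝ → ℝ) : Prop :=
  η 0 = 0 ∧ ∀ ε M : ℝ, 0 < ε → ε ≤ M → 0 < sInf (η '' Set.Icc ε M)

noncomputable def PP (f : ℕ → ℝ) (t : ℕ) : ℝ := ∏ s ∈ Finset.range t, (1 + f s)

noncomputable def YY (f g h α z : ℕ → ℝ) (t : ℕ) : ℝ :=
  z t / PP f t + ∑ s ∈ Finset.range t, (α s * h s - g s) / PP f (s + 1)

def AA (n : ℕ) (f g : ℕ → ℝ) (t : ℕ) : Prop :=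
  ∀ r < t, (∑ j ∈ Finset.range (r + 1), f j) ≤ n ∧ (∑ j ∈ Finset.range (r + 1), g j) ≤ n

open Classical in
noncomputable def DD (n : ℕ) (f g h α z : ℕ → ℝ) (s : ℕ) : ℝ :=
  if AA n f g (s + 1) then YY f g h α z (s + 1) - YY f g h α z s else 0

noncomputable def WW (n : ℕ) (f g h α z : ℕ → ℝ) (t : ℕ) : ℝ :=
  z 0 + ∑ s ∈ Finset.range t, DD n f g h α z s

lemma PP_zero (f : ℕ → ℝ) : PP f 0 = 1 := by simp [PP]

lemma PP_succ (f : ℕ → ℝ) (t : ℕ) : PP f (t + 1) = PP f t * (1 + f t) := by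
  simp [PP, Finset.prod_range_succ]

lemma one_le_PP {f : ℕ → ℝ} (hf : ∀ s, 0 ≤ f s) (t : ℕ) : 1 ≤ PP f t := by
  have : (1 : ℝ) = ∏ _s ∈ Finset.range t, (1 : ℝ) := by simp
  rw [this]
  exact Finset.prod_le_prod (fun i _ => zero_le_one) (fun i _ => by linarith [hf i])

lemma PP_pos {f : ℕ → ℝ} (hf : ∀ s, 0 ≤ f s) (t : ℕ) : 0 < PP f t :=
  lt_of_lt_of_le one_pos (one_le_PP hf t)

lemma PP_mono {f : ℕ → ℝ} (hf : ∀ s, 0 ≤ f s) : Monotone (PP f) :=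
  monotone_nat_of_le_succ fun t => by
    rw [PP_succ]; nlinarith [one_le_PP hf t, hf t]

lemma PP_le_exp {f : ℕ → ℝ} (hf : ∀ s, 0 ≤ f s) (hfs : Summable f) (t : ℕ) :
    PP f t ≤ Real.exp (∑' s, f s) := by
  have h1 : PP f t ≤ Real.exp (∑ s ∈ Finset.range t, f s) := by
    rw [Real.exp_sum]
    exact Finset.prod_le_prod (fun i _ => by linarith [hf i])
      (fun i _ => by linarith [Real.add_one_le_exp (f i)])
  exact h1.trans (Real.exp_le_exp.2 (Summable.sum_le_tsum _ (fun i _ => hf i) hfs))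

lemma AA_anti {n : ℕ} {f g : ℕ → ℝ} {s t : ℕ} (h : AA n f g t) (hst : s ≤ t) : AA n f g s :=
  fun r hr => h r (lt_of_lt_of_le hr hst)

lemma YY_zero (f g h α z : ℕ → ℝ) : YY f g h α z 0 = z 0 := by simp [YY, PP_zero]

lemma sum_g_le_of_AA {n k : ℕ} {f g : ℕ → ℝ} (hAA : AA n f g k) :
    (∑ j ∈ Finset.range k, g j) ≤ n := by
  cases k with
  | zero => simp
  | succ m => exact (hAA m (Nat.lt_succ_self m)).2

lemma YY_lb {n : ℕ} {f g h α z : ℕ → ℝ}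
    (hf0 : ∀ t, 0 ≤ f t) (hg0 : ∀ t, 0 ≤ g t) (hh0 : ∀ t, 0 ≤ h t)
    (hα0 : ∀ t, 0 ≤ α t) (hz0 : ∀ t, 0 ≤ z t) {k : ℕ} (hAA : AA n f g k) :
    -(n : ℝ) ≤ YY f g h α z k := by
  have hterm : ∀ s, -(g s) ≤ (α s * h s - g s) / PP f (s + 1) := by
    intro s
    have hP := PP_pos hf0 (s + 1)
    have h1 : (-(g s)) / PP f (s + 1) ≤ (α s * h s - g s) / PP f (s + 1) := by
      gcongr
      nlinarith [mul_nonneg (hα0 s) (hh0 s)]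
    have h2 : -(g s) ≤ (-(g s)) / PP f (s + 1) := by
      rw [neg_div, neg_le_neg_iff]
      exact div_le_self (hg0 s) (one_le_PP hf0 (s + 1))
    exact h2.trans h1
  have hsum : -(∑ s ∈ Finset.range k, g s) ≤
      ∑ s ∈ Finset.range k, (α s * h s - g s) / PP f (s + 1) := by
    rw [← Finset.sum_neg_distrib]
    exact Finset.sum_le_sum fun s _ => hterm s
  have hz' : 0 ≤ z k / PP f k := div_nonneg (hz0 k) (PP_pos hf0 k).le
  have := sum_g_le_of_AA hAA
  simp only [YY]
  linarith

lemma WW_eq_YY {n : ℕ} {f g h α z : ℕ → ℝ} :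
    ∀ {t : ℕ}, AA n f g t → WW n f g h α z t = YY f g h α z t := by
  intro t
  induction t with
  | zero => intro _; simp [WW, YY_zero]
  | succ m ih =>
    intro hAA
    have hAAm := AA_anti hAA (Nat.le_succ m)
    simp only [WW, Finset.sum_range_succ] at *
    rw [DD, if_pos hAA]
    have := ih hAAm
    linarith [this]

lemma WW_stop {n : ℕ} (f g h α z : ℕ → ℝ) :
    ∀ t : ℕ, ∃ k, k ≤ t ∧ AA n f g k ∧ WW n f g h α z t = YY f g h α z k := by
  intro t
  induction t with
  | zero =>
    exact ⟨0, le_refl 0, fun r hr => absurd hr (Nat.not_lt_zero r), by simp [WW, YY_zero]⟩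
  | succ m ih =>
    obtain ⟨k, hk, hAAk, hWk⟩ := ih
    by_cases hA : AA n f g (m + 1)
    · exact ⟨m + 1, le_refl _, hA, WW_eq_YY hA⟩
    · refine ⟨k, hk.trans (Nat.le_succ m), hAAk, ?_⟩
      simp only [WW, Finset.sum_range_succ] at *
      rw [DD, if_neg hA]
      linarith [hWk]

lemma WW_lb {n : ℕ} {f g h α z : ℕ → ℝ}
    (hf0 : ∀ t, 0 ≤ f t) (hg0 : ∀ t, 0 ≤ g t) (hh0 : ∀ t, 0 ≤ h t)
    (hα0 : ∀ t, 0 ≤ α t) (hz0 : ∀ t, 0 ≤ z t) (t : ℕ) :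
    -(n : ℝ) ≤ WW n f g h α z t := by
  obtain ⟨k, _, hAAk, hWk⟩ := WW_stop (n := n) f g h α z t
  rw [hWk]
  exact YY_lb hf0 hg0 hh0 hα0 hz0 hAAk

lemma det_final {f g h α z : ℕ → ℝ} {η : ℝ → ℝ}
    (hf0 : ∀ t, 0 ≤ f t) (hg0 : ∀ t, 0 ≤ g t) (hh0 : ∀ t, 0 ≤ h t)
    (hα0 : ∀ t, 0 ≤ α t) (hz0 : ∀ t, 0 ≤ z t)
    (hfs : Summable f) (hgs : Summable g) (hαd : ¬ Summable α)
    (hη : ClassB η) (hhη : ∀ t, η (z t) ≤ h t)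
    (hY : ∃ c, Tendsto (YY f g h α z) atTop (nhds c)) :
    Tendsto z atTop (nhds 0) := by
  obtain ⟨c, hc⟩ := hY
  have hP1 := one_le_PP hf0
  have hPpos := PP_pos hf0
  have hPmono := PP_mono hf0
  have hPexp := PP_le_exp hf0 hfs
  have hPb : BddAbove (Set.range (PP f)) :=
    ⟨Real.exp (∑' s, f s), fun x ⟨t, ht⟩ => ht ▸ hPexp t⟩
  have hPlim : Tendsto (PP f) atTop (nhds (⨆ t, PP f t)) := tendsto_atTop_ciSup hPmono hPb
  have hsg : Summable (fun s => g s / PP f (s + 1)) :=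
    Summable.of_nonneg_of_le (fun s => div_nonneg (hg0 s) (hPpos _).le)
      (fun s => div_le_self (hg0 s) (hP1 _)) hgs
  obtain ⟨B1, hB1⟩ := hc.bddAbove_range
  have hsah : Summable (fun s => α s * h s / PP f (s + 1)) := by
    apply summable_of_sum_range_le
      (c := B1 + ∑' s, g s / PP f (s + 1))
      (fun s => div_nonneg (mul_nonneg (hα0 s) (hh0 s)) (hPpos _).le)
    intro t
    have hid : ∑ s ∈ Finset.range t, α s * h s / PP f (s + 1) =
        YY f g h α z t - z t / PP f t + ∑ s ∈ Finset.range t, g s / PP f (s + 1) := by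
      simp only [YY, sub_div, Finset.sum_sub_distrib]
      ring
    rw [hid]
    have h1 : YY f g h α z t ≤ B1 := hB1 ⟨t, rfl⟩
    have h2 : 0 ≤ z t / PP f t := div_nonneg (hz0 t) (hPpos t).le
    have h3 : ∑ s ∈ Finset.range t, g s / PP f (s + 1) ≤ ∑' s, g s / PP f (s + 1) :=
      Summable.sum_le_tsum _ (fun s _ => div_nonneg (hg0 s) (hPpos _).le) hsg
    linarith
  have hsah' : Summable (fun s => α s * h s) := by
    refine Summable.of_nonneg_of_le (fun s => mul_nonneg (hα0 s) (hh0 s))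
      (fun s => ?_) (hsah.mul_right (Real.exp (∑' s, f s)))
    have : α s * h s / PP f (s + 1) * PP f (s + 1) ≤
        α s * h s / PP f (s + 1) * Real.exp (∑' s, f s) :=
      mul_le_mul_of_nonneg_left (hPexp (s + 1))
        (div_nonneg (mul_nonneg (hα0 s) (hh0 s)) (hPpos _).le)
    rwa [div_mul_cancel₀ _ (hPpos (s + 1)).ne'] at this
  have hsub : Summable (fun s => (α s * h s - g s) / PP f (s + 1)) := by
    have := (hsah.sub hsg)
    refine this.congr fun s => ?_
    rw [sub_div]
  have hSconv : Tendsto (fun t => ∑ s ∈ Finset.range t, (α s * h s - g s) / PP f (s + 1))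
      atTop (nhds (∑' s, (α s * h s - g s) / PP f (s + 1))) :=
    hsub.hasSum.tendsto_sum_nat
  set S := ∑' s, (α s * h s - g s) / PP f (s + 1) with hS
  have hzP : Tendsto (fun t => z t / PP f t) atTop (nhds (c - S)) := by
    have := hc.sub hSconv
    exact this.congr fun t => by simp only [YY]; ring
  set Pl := ⨆ t, PP f t with hPl
  have hz : Tendsto z atTop (nhds ((c - S) * Pl)) := by
    have := hzP.mul hPlim
    exact this.congr fun t => div_mul_cancel₀ _ (hPpos t).ne'
  set L := (c - S) * Pl with hL
  have hL0 : 0 ≤ L := ge_of_tendsto hz (Eventually.of_forall hz0)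
  have hLzero : L = 0 := by
    by_contra hne
    have hLpos : 0 < L := hL0.lt_of_ne (Ne.symm hne)
    have hev : ∀ᶠ t in atTop, z t ∈ Set.Icc (L / 2) (2 * L) := by
      filter_upwards [hz.eventually (Ioo_mem_nhds (by linarith) (by linarith) :
        Set.Ioo (L / 2) (3 / 2 * L) ∈ nhds L)] with t ht
      exact ⟨ht.1.le, by nlinarith [ht.2]⟩
    obtain ⟨T, hT⟩ := eventually_atTop.1 hev
    set c0 := sInf (η '' Set.Icc (L / 2) (2 * L)) with hc0def
    have hc0 : 0 < c0 := hη.2 _ _ (by linarith) (by linarith)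
    have hbb : BddBelow (η '' Set.Icc (L / 2) (2 * L)) := by
      by_contra hb
      rw [hc0def, Real.sInf_of_not_bddBelow hb] at hc0
      exact lt_irrefl _ hc0
    have hhc : ∀ t, T ≤ t → c0 ≤ h t := fun t ht' =>
      le_trans (csInf_le hbb ⟨z t, hT t ht', rfl⟩) (hhη t)
    apply hαd
    rw [← summable_nat_add_iff T]
    refine Summable.of_nonneg_of_le (fun t => hα0 _) (fun t => ?_)
      (((summable_nat_add_iff T).2 hsah').mul_left c0⁻¹)
    have h1 : c0 * α (t + T) ≤ h (t + T) * α (t + T) :=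
      mul_le_mul_of_nonneg_right (hhc _ (Nat.le_add_left T t)) (hα0 _)
    calc α (t + T) = c0⁻¹ * (c0 * α (t + T)) := by field_simp
    _ ≤ c0⁻¹ * (α (t + T) * h (t + T)) := by
        refine mul_le_mul_of_nonneg_left ?_ (inv_nonneg.2 hc0.le)
        linarith [h1]
  rw [hLzero] at hz
  exact hz

lemma YY_succ_sub (f g h α z : ℕ → ℝ) (s : ℕ) :
    YY f g h α z (s + 1) - YY f g h α z s =
      z (s + 1) / PP f (s + 1) - z s / PP f s + (α s * h s - g s) / PP f (s + 1) := by
  simp only [YY, Finset.sum_range_succ]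
  ring

lemma zdiv_cancel {f z : ℕ → ℝ} (hf0 : ∀ t, 0 ≤ f t) (s : ℕ) :
    ((1 + f s) * z s) / PP f (s + 1) = z s / PP f s := by
  have h1 : (1 : ℝ) + f s ≠ 0 := by linarith [hf0 s]
  have h2 : PP f s ≠ 0 := (PP_pos hf0 s).ne'
  rw [PP_succ]
  field_simp

lemma g_le_of_AA {n : ℕ} {f g : ℕ → ℝ} {s : ℕ} (hg0 : ∀ t, 0 ≤ g t)
    (hA : AA n f g (s + 1)) : g s ≤ n := by
  have h1 : g s ≤ ∑ j ∈ Finset.range (s + 1), g j :=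
    Finset.single_le_sum (fun j _ => hg0 j) (Finset.self_mem_range_succ s)
  exact h1.trans (hA s (Nat.lt_succ_self s)).2

lemma ahdiv_le {n : ℕ} {f g h α z : ℕ → ℝ} {s : ℕ}
    (hf0 : ∀ t, 0 ≤ f t) (hg0 : ∀ t, 0 ≤ g t) (hz0 : ∀ t, 0 ≤ z t)
    (hA : AA n f g (s + 1))
    (hb : α s * h s ≤ (1 + f s) * z s + g s) :
    α s * h s / PP f (s + 1) ≤ z s + (n : ℝ) := by
  have hP := PP_pos hf0 (s + 1)
  have h1 : α s * h s / PP f (s + 1) ≤ ((1 + f s) * z s + g s) / PP f (s + 1) :=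
    (div_le_div_iff_of_pos_right hP).2 (by linarith)
  have h2 : ((1 + f s) * z s + g s) / PP f (s + 1) =
      z s / PP f s + g s / PP f (s + 1) := by
    rw [add_div, zdiv_cancel hf0]
  have h3 : z s / PP f s ≤ z s := div_le_self (hz0 s) (one_le_PP hf0 s)
  have h4 : g s / PP f (s + 1) ≤ g s := div_le_self (hg0 s) (one_le_PP hf0 (s + 1))
  have h5 := g_le_of_AA hg0 hA
  linarith

lemma D2_abs_le {n : ℕ} {f g h α z : ℕ → ℝ} {s : ℕ}
    (hf0 : ∀ t, 0 ≤ f t) (hg0 : ∀ t, 0 ≤ g t) (hh0 : ∀ t, 0 ≤ h t)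
    (hα0 : ∀ t, 0 ≤ α t) (hz0 : ∀ t, 0 ≤ z t)
    (hA : AA n f g (s + 1))
    (hb : α s * h s ≤ (1 + f s) * z s + g s) :
    |(α s * h s - g s) / PP f (s + 1) - z s / PP f s| ≤ 2 * z s + 3 * n := by
  have hP := PP_pos hf0 (s + 1)
  have hah := mul_nonneg (hα0 s) (hh0 s)
  have h1 : |(α s * h s - g s) / PP f (s + 1)| ≤
      α s * h s / PP f (s + 1) + g s / PP f (s + 1) := by
    rw [abs_div, abs_of_pos hP, ← add_div]
    refine (div_le_div_iff_of_pos_right hP).2 ?_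
    exact (abs_sub (α s * h s) (g s)).trans (by
      rw [abs_of_nonneg hah, abs_of_nonneg (hg0 s)])
  have h2 := ahdiv_le hf0 hg0 hz0 hA hb
  have h3 : g s / PP f (s + 1) ≤ g s := div_le_self (hg0 s) (one_le_PP hf0 (s + 1))
  have h4 := g_le_of_AA hg0 hA
  have h5 : z s / PP f s ≤ z s := div_le_self (hz0 s) (one_le_PP hf0 s)
  have h6 : 0 ≤ z s / PP f s := div_nonneg (hz0 s) (PP_pos hf0 s).le
  calc |(α s * h s - g s) / PP f (s + 1) - z s / PP f s|
      ≤ |(α s * h s - g s) / PP f (s + 1)| + |z s / PP f s| := abs_sub _ _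
    _ ≤ (z s + n + g s) + z s / PP f s := by
        rw [abs_of_nonneg h6]; linarith
    _ ≤ 2 * z s + 3 * n := by linarith

lemma DD_abs_le {n : ℕ} {f g h α z : ℕ → ℝ} {s : ℕ}
    (hf0 : ∀ t, 0 ≤ f t) (hg0 : ∀ t, 0 ≤ g t) (hh0 : ∀ t, 0 ≤ h t)
    (hα0 : ∀ t, 0 ≤ α t) (hz0 : ∀ t, 0 ≤ z t)
    (hb : α s * h s ≤ (1 + f s) * z s + g s) :
    |DD n f g h α z s| ≤ z (s + 1) + 2 * z s + 3 * n := by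
  by_cases hA : AA n f g (s + 1)
  · simp only [DD, if_pos hA]
    rw [YY_succ_sub]
    have h1 : |z (s + 1) / PP f (s + 1)| ≤ z (s + 1) := by
      rw [abs_of_nonneg (div_nonneg (hz0 _) (PP_pos hf0 _).le)]
      exact div_le_self (hz0 _) (one_le_PP hf0 _)
    have h2 := D2_abs_le hf0 hg0 hh0 hα0 hz0 hA hb
    calc |z (s + 1) / PP f (s + 1) - z s / PP f s + (α s * h s - g s) / PP f (s + 1)|
        = |z (s + 1) / PP f (s + 1) + ((α s * h s - g s) / PP f (s + 1) - z s / PP f s)| := by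
          ring_nf
      _ ≤ |z (s + 1) / PP f (s + 1)| + |(α s * h s - g s) / PP f (s + 1) - z s / PP f s| :=
          abs_add_le _ _
      _ ≤ z (s + 1) + 2 * z s + 3 * n := by linarith
  · simp only [DD, if_neg hA, abs_zero]
    have := hz0 (s + 1)
    have := hz0 s
    positivity

lemma cond_step {f g h α z : ℕ → ℝ} {s : ℕ} {X : ℝ}
    (hf0 : ∀ t, 0 ≤ f t)
    (hX : X ≤ (1 + f s) * z s + g s - α s * h s) :
    (PP f (s + 1))⁻¹ * X + ((α s * h s - g s) / PP f (s + 1) - z s / PP f s) ≤ 0 := by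
  have hP := PP_pos hf0 (s + 1)
  have h1 : (PP f (s + 1))⁻¹ * X ≤
      (PP f (s + 1))⁻¹ * ((1 + f s) * z s + g s - α s * h s) :=
    mul_le_mul_of_nonneg_left hX (inv_nonneg.2 hP.le)
  have h2 : (PP f (s + 1))⁻¹ * ((1 + f s) * z s + g s - α s * h s) +
      ((α s * h s - g s) / PP f (s + 1) - z s / PP f s) = 0 := by
    rw [inv_mul_eq_div, ← zdiv_cancel hf0 (z := z) s]
    field_simp
    ring
  linarith

lemma key_lemma {Ω : Type*} {m0 : MeasurableSpace Ω}
    {μ : Measure Ω} [IsProbabilityMeasure μ]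
    (ℱ : Filtration ℕ m0)
    (z f g h α : ℕ → Ω → ℝ)
    (hz_nonneg : ∀ t, ∀ᵐ ω ∂μ, 0 ≤ z t ω)
    (hf_nonneg : ∀ t, ∀ᵐ ω ∂μ, 0 ≤ f t ω)
    (hg_nonneg : ∀ t, ∀ᵐ ω ∂μ, 0 ≤ g t ω)
    (hh_nonneg : ∀ t, ∀ᵐ ω ∂μ, 0 ≤ h t ω)
    (hα_nonneg : ∀ t, ∀ᵐ ω ∂μ, 0 ≤ α t ω)
    (hz_adapted : Adapted ℱ z) (hf_adapted : Adapted ℱ f)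
    (hg_adapted : Adapted ℱ g) (hh_adapted : Adapted ℱ h)
    (hα_adapted : Adapted ℱ α)
    (hz_int : ∀ t, Integrable (z t) μ)
    (hrec : ∀ t, ∀ᵐ ω ∂μ,
      (μ[z (t + 1)|ℱ t]) ω ≤ (1 + f t ω) * z t ω + g t ω - α t ω * h t ω)
    (n : ℕ) :
    ∀ᵐ ω ∂μ, ∃ c, Tendsto (fun t => WW n (fun i => f i ω) (fun i => g i ω)
      (fun i => h i ω) (fun i => α i ω) (fun i => z i ω) t) atTop (nhds c) := by
  classical
  have hpath : ∀ᵐ ω ∂μ, ∀ t, 0 ≤ z t ω ∧ 0 ≤ f t ω ∧ 0 ≤ g t ω ∧ 0 ≤ h t ω ∧ 0 ≤ α t ω := by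
    rw [ae_all_iff]
    intro t
    filter_upwards [hz_nonneg t, hf_nonneg t, hg_nonneg t, hh_nonneg t, hα_nonneg t] with
      ω h1 h2 h3 h4 h5
    exact ⟨h1, h2, h3, h4, h5⟩
  -- measurability helpers
  have hm : ∀ (x : ℕ → Ω → ℝ), Adapted ℱ x → ∀ s k : ℕ, s ≤ k → Measurable[ℱ k] (x s) :=
    fun x hx s k hsk => (hx s).mono (ℱ.mono hsk) le_rfl
  have hPmeas : ∀ t k : ℕ, t ≤ k + 1 →
      Measurable[ℱ k] fun ω => PP (fun i => f i ω) t := by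
    intro t k htk
    have he : (fun ω => PP (fun i => f i ω) t) =
        fun ω => ∏ s ∈ Finset.range t, (1 + f s ω) := rfl
    rw [he]
    exact Finset.measurable_prod _ fun s hs =>
      measurable_const.add (hm f hf_adapted s k (by
        have := Finset.mem_range.1 hs; omega))
  have hsummeas : ∀ (x : ℕ → Ω → ℝ), Adapted ℱ x → ∀ r k : ℕ, r ≤ k →
      Measurable[ℱ k] (fun ω => ∑ j ∈ Finset.range (r + 1), x j ω) :=
    fun x hx r k hrk => Finset.measurable_sum _ fun j hj => hm x hx j k (by
      have := Finset.mem_range.1 hj; omega)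
  have hSmeas : ∀ t k : ℕ, t ≤ k + 1 →
      MeasurableSet[ℱ k] {ω | AA n (fun i => f i ω) (fun i => g i ω) t} := by
    intro t k htk
    have he : {ω | AA n (fun i => f i ω) (fun i => g i ω) t} =
        ⋂ r ∈ Finset.range t, ({ω | (∑ j ∈ Finset.range (r + 1), f j ω) ≤ n} ∩
          {ω | (∑ j ∈ Finset.range (r + 1), g j ω) ≤ n}) := by
      ext ω
      simp [AA, Set.mem_iInter, Finset.mem_range]
    rw [he]
    exact MeasurableSet.biInter (Finset.range t).countable_toSet fun r hr =>
      ((measurableSet_le (hsummeas f hf_adapted r k (by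
          have := Finset.mem_range.1 hr; omega)) measurable_const).inter
        (measurableSet_le (hsummeas g hg_adapted r k (by
          have := Finset.mem_range.1 hr; omega)) measurable_const))
  have hYmeas : ∀ t : ℕ, Measurable[ℱ t] fun ω => YY (fun i => f i ω) (fun i => g i ω)
      (fun i => h i ω) (fun i => α i ω) (fun i => z i ω) t := by
    intro t
    have he : (fun ω => YY (fun i => f i ω) (fun i => g i ω)
        (fun i => h i ω) (fun i => α i ω) (fun i => z i ω) t) =
        fun ω => z t ω / PP (fun i => f i ω) t +
          ∑ s ∈ Finset.range t, (α s ω * h s ω - g s ω) / PP (fun i => f i ω) (s + 1) := rfl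
    rw [he]
    refine Measurable.add ?_ ?_
    · exact (hm z hz_adapted t t le_rfl).div (hPmeas t t (by omega))
    · refine Finset.measurable_sum _ fun s hs => ?_
      have hs' : s ≤ t := le_of_lt (Finset.mem_range.1 hs)
      exact (((hm α hα_adapted s t hs').mul (hm h hh_adapted s t hs')).sub
        (hm g hg_adapted s t hs')).div (hPmeas (s + 1) t (by omega))
  have hDeq : ∀ s : ℕ, (fun ω => DD n (fun i => f i ω) (fun i => g i ω)
      (fun i => h i ω) (fun i => α i ω) (fun i => z i ω) s) =
      ({ω | AA n (fun i => f i ω) (fun i => g i ω) (s + 1)}).indicator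
        (fun ω => YY (fun i => f i ω) (fun i => g i ω) (fun i => h i ω)
          (fun i => α i ω) (fun i => z i ω) (s + 1) -
          YY (fun i => f i ω) (fun i => g i ω) (fun i => h i ω)
          (fun i => α i ω) (fun i => z i ω) s) := by
    intro s
    funext ω
    by_cases hA : ω ∈ {ω | AA n (fun i => f i ω) (fun i => g i ω) (s + 1)}
    · have hA' : AA n (fun i => f i ω) (fun i => g i ω) (s + 1) := hA
      rw [Set.indicator_of_mem hA]
      simp only [DD, if_pos hA']
    · have hA' : ¬ AA n (fun i => f i ω) (fun i => g i ω) (s + 1) := hA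
      rw [Set.indicator_of_notMem hA]
      simp only [DD, if_neg hA']
  have hDmeas : ∀ s : ℕ, Measurable[ℱ (s + 1)] (fun ω => DD n (fun i => f i ω)
      (fun i => g i ω) (fun i => h i ω) (fun i => α i ω) (fun i => z i ω) s) := by
    intro s
    rw [hDeq s]
    exact Measurable.indicator
      ((hYmeas (s + 1)).sub ((hYmeas s).mono (ℱ.mono (Nat.le_succ s)) le_rfl))
      ((ℱ.mono (Nat.le_succ s)) _ (hSmeas (s + 1) s (by omega)))
  have hEcond : ∀ s : ℕ, 0 ≤ᵐ[μ] μ[z (s + 1)|ℱ s] := fun s => condExp_nonneg (hz_nonneg (s + 1))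
  have hDint : ∀ s : ℕ, Integrable (fun ω => DD n (fun i => f i ω) (fun i => g i ω)
      (fun i => h i ω) (fun i => α i ω) (fun i => z i ω) s) μ := by
    intro s
    refine Integrable.mono' (((hz_int (s + 1)).add ((hz_int s).const_mul 2)).add
      (integrable_const (3 * (n : ℝ))))
      (((hDmeas s).mono (ℱ.le (s + 1)) le_rfl).aestronglyMeasurable) ?_
    filter_upwards [hpath, hrec s, hEcond s] with ω hp hr hE
    have hb : α s ω * h s ω ≤ (1 + f s ω) * z s ω + g s ω := by
      simp only [Pi.zero_apply] at hE
      linarith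
    rw [Real.norm_eq_abs]
    exact DD_abs_le (fun t => (hp t).2.1) (fun t => (hp t).2.2.1) (fun t => (hp t).2.2.2.1)
      (fun t => (hp t).2.2.2.2) (fun t => (hp t).1) hb
  have hWeq : ∀ t : ℕ, (fun ω => WW n (fun i => f i ω) (fun i => g i ω)
      (fun i => h i ω) (fun i => α i ω) (fun i => z i ω) t) =
      fun ω => z 0 ω + ∑ s ∈ Finset.range t, DD n (fun i => f i ω) (fun i => g i ω)
        (fun i => h i ω) (fun i => α i ω) (fun i => z i ω) s := fun t => rfl
  have hWint : ∀ t : ℕ, Integrable (fun ω => WW n (fun i => f i ω) (fun i => g i ω)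
      (fun i => h i ω) (fun i => α i ω) (fun i => z i ω) t) μ := by
    intro t
    rw [hWeq t]
    exact (hz_int 0).add (integrable_finset_sum _ fun s _ => hDint s)
  have hWadp : StronglyAdapted ℱ (fun t ω => WW n (fun i => f i ω) (fun i => g i ω)
      (fun i => h i ω) (fun i => α i ω) (fun i => z i ω) t) := by
    intro t
    apply Measurable.stronglyMeasurable
    exact (hm z hz_adapted 0 t (Nat.zero_le t)).add
      (Finset.measurable_sum _ fun s hs => (hDmeas s).mono
        (ℱ.mono (Finset.mem_range.1 hs)) le_rfl)
  have hDcond : ∀ s : ℕ, μ[(fun ω => DD n (fun i => f i ω) (fun i => g i ω)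
      (fun i => h i ω) (fun i => α i ω) (fun i => z i ω) s)|ℱ s] ≤ᵐ[μ] 0 := by
    intro s
    set S : Set Ω := {ω | AA n (fun i => f i ω) (fun i => g i ω) (s + 1)} with hSdef
    set csec : Ω → ℝ := S.indicator (fun ω => (PP (fun i => f i ω) (s + 1))⁻¹) with hcdef
    set D2 : Ω → ℝ := S.indicator (fun ω =>
      (α s ω * h s ω - g s ω) / PP (fun i => f i ω) (s + 1) -
        z s ω / PP (fun i => f i ω) s) with hD2def
    have hsplit : (fun ω => DD n (fun i => f i ω) (fun i => g i ω)
        (fun i => h i ω) (fun i => α i ω) (fun i => z i ω) s) =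
        (fun ω => csec ω * z (s + 1) ω) + D2 := by
      funext ω
      simp only [Pi.add_apply, hcdef, hD2def]
      by_cases hA : ω ∈ S
      · have hA' : AA n (fun i => f i ω) (fun i => g i ω) (s + 1) := hA
        rw [Set.indicator_of_mem hA, Set.indicator_of_mem hA]
        simp only [DD, if_pos hA']
        rw [YY_succ_sub, inv_mul_eq_div]
        ring
      · have hA' : ¬ AA n (fun i => f i ω) (fun i => g i ω) (s + 1) := hA
        rw [Set.indicator_of_notMem hA, Set.indicator_of_notMem hA]
        simp only [DD, if_neg hA']
        ring
    have hcmeas : StronglyMeasurable[ℱ s] csec :=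
      (((hPmeas (s + 1) s (by omega)).inv).indicator
        (hSmeas (s + 1) s (by omega))).stronglyMeasurable
    have hcbound : ∀ᵐ ω ∂μ, 0 ≤ csec ω ∧ csec ω ≤ 1 := by
      filter_upwards [hpath] with ω hp
      simp only [hcdef]
      by_cases hA : ω ∈ S
      · rw [Set.indicator_of_mem hA]
        have h1 : 1 ≤ PP (fun i => f i ω) (s + 1) := one_le_PP (fun t => (hp t).2.1) _
        constructor
        · positivity
        · exact inv_le_one_of_one_le₀ h1
      · rw [Set.indicator_of_notMem hA]
        exact ⟨le_refl 0, zero_le_one⟩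
    have hcz_int : Integrable (fun ω => csec ω * z (s + 1) ω) μ := by
      refine Integrable.mono' (hz_int (s + 1)).abs
        (((hcmeas.measurable.mono (ℱ.le s) le_rfl).mul
          ((hz_adapted (s + 1)).mono (ℱ.le _) le_rfl)).aestronglyMeasurable) ?_
      filter_upwards [hcbound, hpath] with ω hc hp
      rw [Real.norm_eq_abs, abs_mul]
      have h1 : |csec ω| ≤ 1 := by rw [abs_of_nonneg hc.1]; exact hc.2
      nlinarith [abs_nonneg (z (s + 1) ω), abs_nonneg (csec ω)]
    have hD2meas : StronglyMeasurable[ℱ s] D2 := by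
      refine (Measurable.indicator ?_ (hSmeas (s + 1) s (by omega))).stronglyMeasurable
      exact ((((hm α hα_adapted s s le_rfl).mul (hm h hh_adapted s s le_rfl)).sub
        (hm g hg_adapted s s le_rfl)).div (hPmeas (s + 1) s (by omega))).sub
        ((hm z hz_adapted s s le_rfl).div (hPmeas s s (by omega)))
    have hD2int : Integrable D2 μ := by
      refine Integrable.mono' (((hz_int s).const_mul 2).add (integrable_const (3 * (n : ℝ))))
        ((hD2meas.measurable.mono (ℱ.le s) le_rfl).aestronglyMeasurable) ?_
      filter_upwards [hpath, hrec s, hEcond s] with ω hp hr hE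
      have hb : α s ω * h s ω ≤ (1 + f s ω) * z s ω + g s ω := by
        simp only [Pi.zero_apply] at hE
        linarith
      rw [Real.norm_eq_abs]
      simp only [Pi.add_apply]
      simp only [hD2def]
      by_cases hA : ω ∈ S
      · have hA' : AA n (fun i => f i ω) (fun i => g i ω) (s + 1) := hA
        rw [Set.indicator_of_mem hA]
        exact D2_abs_le (fun t => (hp t).2.1) (fun t => (hp t).2.2.1)
          (fun t => (hp t).2.2.2.1) (fun t => (hp t).2.2.2.2) (fun t => (hp t).1) hA' hb
      · rw [Set.indicator_of_notMem hA, abs_zero]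
        have h0 : (0 : ℝ) ≤ (n : ℝ) := Nat.cast_nonneg n
        linarith [(hp s).1]
    have hD2cond : μ[D2|ℱ s] = D2 :=
      condExp_of_stronglyMeasurable (ℱ.le s) hD2meas hD2int
    have hczcond : μ[(fun ω => csec ω * z (s + 1) ω)|ℱ s] =ᵐ[μ]
        fun ω => csec ω * (μ[z (s + 1)|ℱ s]) ω := by
      have := condExp_mul_of_stronglyMeasurable_left hcmeas (μ := μ) (g := z (s + 1)) ?_ (hz_int (s + 1))
      · exact this
      · exact hcz_int
    have hadd : μ[(fun ω => DD n (fun i => f i ω) (fun i => g i ω)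
        (fun i => h i ω) (fun i => α i ω) (fun i => z i ω) s)|ℱ s] =ᵐ[μ]
        μ[(fun ω => csec ω * z (s + 1) ω)|ℱ s] + μ[D2|ℱ s] := by
      rw [hsplit]
      exact condExp_add hcz_int hD2int _
    filter_upwards [hadd, hczcond, hrec s, hpath] with ω he1 he2 hr hp
    simp only [Pi.add_apply, Pi.zero_apply]
    rw [he1]
    simp only [Pi.add_apply]
    rw [he2, hD2cond]
    simp only [hcdef, hD2def]
    by_cases hA : ω ∈ S
    · rw [Set.indicator_of_mem hA, Set.indicator_of_mem hA]
      exact cond_step (f := fun i => f i ω) (g := fun i => g i ω) (h := fun i => h i ω)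
        (α := fun i => α i ω) (z := fun i => z i ω) (s := s) (fun t => (hp t).2.1) hr
    · rw [Set.indicator_of_notMem hA, Set.indicator_of_notMem hA]
      simp
  have hstep : ∀ s : ℕ, μ[(fun ω => WW n (fun i => f i ω) (fun i => g i ω)
      (fun i => h i ω) (fun i => α i ω) (fun i => z i ω) (s + 1))|ℱ s] ≤ᵐ[μ]
      (fun ω => WW n (fun i => f i ω) (fun i => g i ω)
        (fun i => h i ω) (fun i => α i ω) (fun i => z i ω) s) := by
    intro s
    have hWsucc : (fun ω => WW n (fun i => f i ω) (fun i => g i ω)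
        (fun i => h i ω) (fun i => α i ω) (fun i => z i ω) (s + 1)) =
        (fun ω => WW n (fun i => f i ω) (fun i => g i ω)
          (fun i => h i ω) (fun i => α i ω) (fun i => z i ω) s) +
        (fun ω => DD n (fun i => f i ω) (fun i => g i ω)
          (fun i => h i ω) (fun i => α i ω) (fun i => z i ω) s) := by
      funext ω
      simp only [Pi.add_apply, WW, Finset.sum_range_succ]
      ring
    have h1 : μ[(fun ω => WW n (fun i => f i ω) (fun i => g i ω)
        (fun i => h i ω) (fun i => α i ω) (fun i => z i ω) (s + 1))|ℱ s] =ᵐ[μ]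
        μ[(fun ω => WW n (fun i => f i ω) (fun i => g i ω)
          (fun i => h i ω) (fun i => α i ω) (fun i => z i ω) s)|ℱ s] +
        μ[(fun ω => DD n (fun i => f i ω) (fun i => g i ω)
          (fun i => h i ω) (fun i => α i ω) (fun i => z i ω) s)|ℱ s] := by
      rw [hWsucc]
      exact condExp_add (hWint s) (hDint s) _
    have h2 : μ[(fun ω => WW n (fun i => f i ω) (fun i => g i ω)
        (fun i => h i ω) (fun i => α i ω) (fun i => z i ω) s)|ℱ s] =
        (fun ω => WW n (fun i => f i ω) (fun i => g i ω)
          (fun i => h i ω) (fun i => α i ω) (fun i => z i ω) s) :=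
      condExp_of_stronglyMeasurable (ℱ.le s) (hWadp s) (hWint s)
    filter_upwards [h1, hDcond s] with ω e1 e3
    rw [e1]
    simp only [Pi.add_apply]
    rw [h2]
    simp only [Pi.zero_apply] at e3
    linarith
  have hsup : Supermartingale (fun t ω => WW n (fun i => f i ω) (fun i => g i ω)
      (fun i => h i ω) (fun i => α i ω) (fun i => z i ω) t) ℱ μ :=
    supermartingale_nat hWadp hWint hstep
  have hWlb : ∀ᵐ ω ∂μ, ∀ t : ℕ, -(n : ℝ) ≤ WW n (fun i => f i ω) (fun i => g i ω)
      (fun i => h i ω) (fun i => α i ω) (fun i => z i ω) t := by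
    filter_upwards [hpath] with ω hp t
    exact WW_lb (fun t => (hp t).2.1) (fun t => (hp t).2.2.1) (fun t => (hp t).2.2.2.1)
      (fun t => (hp t).2.2.2.2) (fun t => (hp t).1) t
  have hWexp : ∀ t : ℕ, ∫ ω, WW n (fun i => f i ω) (fun i => g i ω)
      (fun i => h i ω) (fun i => α i ω) (fun i => z i ω) t ∂μ ≤ ∫ ω, z 0 ω ∂μ := by
    intro t
    have h1 := hsup.2.1 0 t (Nat.zero_le t)
    have h2 := integral_mono_ae integrable_condExp (hWint 0) h1
    rw [integral_condExp (ℱ.le 0)] at h2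
    refine h2.trans ?_
    have h3 : (fun ω => WW n (fun i => f i ω) (fun i => g i ω)
        (fun i => h i ω) (fun i => α i ω) (fun i => z i ω) 0) = z 0 := by
      funext ω
      simp [WW]
    rw [h3]
  set R : ℝ≥0 := Real.toNNReal (∫ ω, z 0 ω ∂μ + 2 * n) with hRdef
  have hbdd : ∀ t : ℕ, eLpNorm (fun ω => WW n (fun i => f i ω) (fun i => g i ω)
      (fun i => h i ω) (fun i => α i ω) (fun i => z i ω) t) 1 μ ≤ (R : ℝ≥0∞) := by
    intro t
    have he : ((R : ℝ≥0) : ℝ≥0∞) = ENNReal.ofReal (∫ ω, z 0 ω ∂μ + 2 * n) := rfl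
    rw [he, eLpNorm_one_eq_lintegral_enorm,
      ← ofReal_integral_norm_eq_lintegral_enorm (hWint t)]
    apply ENNReal.ofReal_le_ofReal
    have h1 : ∫ ω, ‖WW n (fun i => f i ω) (fun i => g i ω)
        (fun i => h i ω) (fun i => α i ω) (fun i => z i ω) t‖ ∂μ ≤
        ∫ ω, (WW n (fun i => f i ω) (fun i => g i ω)
          (fun i => h i ω) (fun i => α i ω) (fun i => z i ω) t + 2 * n) ∂μ := by
      refine integral_mono_ae (hWint t).norm ((hWint t).add (integrable_const _)) ?_
      filter_upwards [hWlb] with ω hlb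
      have h0 : (0 : ℝ) ≤ n := Nat.cast_nonneg n
      rw [Real.norm_eq_abs, abs_le]
      exact ⟨by linarith [hlb t], by linarith [hlb t]⟩
    have h2 : ∫ ω, (WW n (fun i => f i ω) (fun i => g i ω)
        (fun i => h i ω) (fun i => α i ω) (fun i => z i ω) t + 2 * n) ∂μ =
        (∫ ω, WW n (fun i => f i ω) (fun i => g i ω)
          (fun i => h i ω) (fun i => α i ω) (fun i => z i ω) t ∂μ) + 2 * n := by
      rw [integral_add (hWint t) (integrable_const _), integral_const]
      simp [measure_univ]
    linarith [hWexp t, h1, h2]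
  have hneg := hsup.neg
  have hconv := hneg.exists_ae_tendsto_of_bdd (R := R) (fun t => by
    have he : (-(fun t ω => WW n (fun i => f i ω) (fun i => g i ω)
        (fun i => h i ω) (fun i => α i ω) (fun i => z i ω) t)) t =
        -(fun ω => WW n (fun i => f i ω) (fun i => g i ω)
          (fun i => h i ω) (fun i => α i ω) (fun i => z i ω) t) := rfl
    rw [he, eLpNorm_neg]
    exact hbdd t)
  filter_upwards [hconv] with ω hc
  obtain ⟨c, hc⟩ := hc
  refine ⟨-c, ?_⟩
  have h2 := hc.neg
  exact h2.congr fun t => by simp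

/-- If the almost-supermartingale recursion holds with `Σ f_t < ∞`, `Σ g_t < ∞`,
`Σ α_t = ∞` a.s., and `h_t ≥ η(z_t)` for a Class B function `η`, then `z_t → 0` a.s. -/
theorem sa_convergence_to_zero {Ω : Type*} {m0 : MeasurableSpace Ω}
    {μ : Measure Ω} [IsProbabilityMeasure μ]
    (ℱ : Filtration ℕ m0)
    (z f g h α : ℕ → Ω → ℝ)
    (hz_nonneg : ∀ t, ∀ᵐ ω ∂μ, 0 ≤ z t ω)
    (hf_nonneg : ∀ t, ∀ᵐ ω ∂μ, 0 ≤ f t ω)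
    (hg_nonneg : ∀ t, ∀ᵐ ω ∂μ, 0 ≤ g t ω)
    (hh_nonneg : ∀ t, ∀ᵐ ω ∂μ, 0 ≤ h t ω)
    (hα_nonneg : ∀ t, ∀ᵐ ω ∂μ, 0 ≤ α t ω)
    (hz_adapted : Adapted ℱ z) (hf_adapted : Adapted ℱ f)
    (hg_adapted : Adapted ℱ g) (hh_adapted : Adapted ℱ h)
    (hα_adapted : Adapted ℱ α)
    (hz_int : ∀ t, Integrable (z t) μ)
    (hrec : ∀ t, ∀ᵐ ω ∂μ,
      (μ[z (t + 1)|ℱ t]) ω ≤ (1 + f t ω) * z t ω + g t ω - α t ω * h t ω)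
    (hf_sum : ∀ᵐ ω ∂μ, Summable (fun t => f t ω))
    (hg_sum : ∀ᵐ ω ∂μ, Summable (fun t => g t ω))
    (hα_div : ∀ᵐ ω ∂μ, ¬ Summable (fun t => α t ω))
    (η : ℝ → ℝ) (hη : ClassB η)
    (hhη : ∀ t, ∀ᵐ ω ∂μ, η (z t ω) ≤ h t ω) :
    ∀ᵐ ω ∂μ, Tendsto (fun t => z t ω) atTop (nhds 0) := by
  have hpath : ∀ᵐ ω ∂μ, ∀ t, 0 ≤ z t ω ∧ 0 ≤ f t ω ∧ 0 ≤ g t ω ∧ 0 ≤ h t ω ∧ 0 ≤ α t ω := by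
    rw [ae_all_iff]
    intro t
    filter_upwards [hz_nonneg t, hf_nonneg t, hg_nonneg t, hh_nonneg t, hα_nonneg t] with
      ω h1 h2 h3 h4 h5
    exact ⟨h1, h2, h3, h4, h5⟩
  have key : ∀ n : ℕ, ∀ᵐ ω ∂μ, ∃ c, Tendsto (fun t => WW n (fun i => f i ω) (fun i => g i ω)
      (fun i => h i ω) (fun i => α i ω) (fun i => z i ω) t) atTop (nhds c) :=
    fun n => key_lemma ℱ z f g h α hz_nonneg hf_nonneg hg_nonneg hh_nonneg hα_nonneg
      hz_adapted hf_adapted hg_adapted hh_adapted hα_adapted hz_int hrec n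
  filter_upwards [hpath, hf_sum, hg_sum, hα_div, ae_all_iff.2 hhη, ae_all_iff.2 key] with
    ω hp hfs hgs hαd hhη' hkey
  set n : ℕ := ⌈(∑' t, f t ω) + (∑' t, g t ω)⌉₊ with hn
  have hAA : ∀ t, AA n (fun i => f i ω) (fun i => g i ω) t := by
    intro t r _
    have h2 : (0 : ℝ) ≤ ∑' t, g t ω := tsum_nonneg fun i => (hp i).2.2.1
    have h2' : (0 : ℝ) ≤ ∑' t, f t ω := tsum_nonneg fun i => (hp i).2.1
    have hceil := Nat.le_ceil ((∑' t, f t ω) + (∑' t, g t ω))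
    constructor
    · have h1 : ∑ j ∈ Finset.range (r + 1), f j ω ≤ ∑' t, f t ω :=
        Summable.sum_le_tsum _ (fun i _ => (hp i).2.1) hfs
      calc ∑ j ∈ Finset.range (r + 1), (fun i => f i ω) j ≤ ∑' t, f t ω := h1
        _ ≤ (n : ℝ) := by rw [hn]; linarith
    · have h1 : ∑ j ∈ Finset.range (r + 1), g j ω ≤ ∑' t, g t ω :=
        Summable.sum_le_tsum _ (fun i _ => (hp i).2.2.1) hgs
      calc ∑ j ∈ Finset.range (r + 1), (fun i => g i ω) j ≤ ∑' t, g t ω := h1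
        _ ≤ (n : ℝ) := by rw [hn]; linarith
  obtain ⟨c, hc⟩ := hkey n
  exact det_final (fun t => (hp t).2.1) (fun t => (hp t).2.2.1) (fun t => (hp t).2.2.2.1)
    (fun t => (hp t).2.2.2.2) (fun t => (hp t).1) hfs hgs hαd hη (fun t => hhη' t)
    ⟨c, hc.congr fun t => WW_eq_YY (hAA t)⟩
end

section
/- Let (z_t), (f_t), (g_t), (α_t) be nonnegative adapted processes with E[z_{t+1}|F_t] ≤ (1+f_t) z_t + g_t - α_t z_t for all t, where almost surely Σ f_t < ∞, Σ g_t < ∞, Σ α_t = ∞. Let λ ∈ (0,1) be such that almost surely: (i) there exists T with α_t ≥ λ/t for all t ≥ T, (ii) Σ_{t≥1} (t+1)^λ g_t < ∞, and (iii) Σ_{t≥1} (α_t - λ/t) = ∞. Then t^λ z_t → 0 almost surely as t → ∞ (i.e., z_t = o(t^{-λ}) a.s.). -/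
open MeasureTheory Filter Topology
open scoped ENNReal NNReal

private lemma aux_scalar {lam : ℝ} (h0 : 0 < lam) (h1 : lam < 1) {t : ℕ} (ht : 1 ≤ t)
    {F A Z : ℝ} (hF : 0 ≤ F) (hA : 0 ≤ A) (hZ : 0 ≤ Z) :
    ((t : ℝ) + 1) ^ lam * ((1 + F - A) * Z)
      ≤ (1 + ((1 + lam) * F + lam / (t : ℝ) - A)) * ((t : ℝ) ^ lam * Z) := by
  have htR : (1:ℝ) ≤ (t:ℝ) := by exact_mod_cast ht
  have ht0 : (0:ℝ) < (t:ℝ) := by linarith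
  have hsplit : ((t : ℝ) + 1) ^ lam = (t:ℝ) ^ lam * (1 + 1/(t:ℝ)) ^ lam := by
    rw [← Real.mul_rpow ht0.le (by positivity)]
    congr 1
    field_simp
  set u := (1 + 1/(t:ℝ)) ^ lam with hu
  have hu1 : 1 ≤ u := by
    rw [hu]
    apply Real.one_le_rpow (by nlinarith [one_div_pos.mpr ht0]) h0.le
  have hu2 : u ≤ 1 + lam / t := by
    have := rpow_one_add_le_one_add_mul_self (s := 1/(t:ℝ)) (by nlinarith [one_div_pos.mpr ht0]) h0.le h1.le
    rw [mul_one_div] at this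
    exact this
  have hlt : lam / t ≤ lam := div_le_self h0.le htR
  have hdiv0 : 0 ≤ lam / t := by positivity
  have key : u * (1 + F - A) ≤ 1 + ((1+lam)*F + lam/(t:ℝ) - A) := by
    rcases le_total (1 + F - A) 0 with h | h
    · nlinarith [mul_le_mul_of_nonpos_right hu1 h, mul_nonneg h0.le hF]
    · nlinarith [mul_le_mul_of_nonneg_right hu2 h, mul_nonneg hdiv0 hA,
        mul_le_mul_of_nonneg_right hlt hF]
  calc ((t:ℝ)+1)^lam * ((1+F-A)*Z) = ((t:ℝ)^lam * Z) * (u * (1+F-A)) := by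
        rw [hsplit]; ring
    _ ≤ ((t:ℝ)^lam * Z) * (1 + ((1+lam)*F + lam/(t:ℝ) - A)) :=
        mul_le_mul_of_nonneg_left key (by positivity)
    _ = _ := by ring


private lemma seq_lower_bound (y a b c : ℕ → ℝ) (K : ℝ) (hK : 0 ≤ K)
    (hy : ∀ t, 0 ≤ y t) (ha : ∀ t, 0 ≤ a t) (hb : ∀ t, 0 ≤ b t) (hc : ∀ t, 0 ≤ c t)
    (hy0 : y 0 = 0) (t : ℕ) :
    -K ≤ ∑ s ∈ Finset.range t,
      (if (∑ r ∈ Finset.range (s+1), a r) ≤ K ∧ (∑ r ∈ Finset.range (s+1), b r) ≤ K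
        then (∏ r ∈ Finset.range (s+1), (1 + a r))⁻¹ else 0)
        * (y (s+1) - ((1 + a s - c s) * y s + b s)) := by
  classical
  set P : ℕ → ℝ := fun n => ∏ r ∈ Finset.range n, (1 + a r) with hPdef
  set cond : ℕ → Prop := fun s =>
    (∑ r ∈ Finset.range (s+1), a r) ≤ K ∧ (∑ r ∈ Finset.range (s+1), b r) ≤ K with hconddef
  set S : ℕ → ℝ := fun n => ∑ s ∈ Finset.range n,
      (if cond s then (P (s+1))⁻¹ else 0) * (y (s+1) - ((1 + a s - c s) * y s + b s)) with hSdef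
  show -K ≤ S t
  have hP1 : ∀ n, 1 ≤ P n := by
    intro n
    simp only [hPdef]
    calc (1:ℝ) = ∏ r ∈ Finset.range n, 1 := by simp
      _ ≤ ∏ r ∈ Finset.range n, (1 + a r) :=
          Finset.prod_le_prod (fun i _ => zero_le_one) (fun i _ => by linarith [ha i])
  have hP0 : ∀ n, 0 < P n := fun n => lt_of_lt_of_le one_pos (hP1 n)
  have hPsucc : ∀ n, P (n+1) = P n * (1 + a n) := by
    intro n
    simp only [hPdef]
    exact Finset.prod_range_succ _ _
  have hQP : ∀ n, (P (n+1))⁻¹ * (1 + a n) = (P n)⁻¹ := by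
    intro n
    rw [hPsucc n]
    have h1 : (0:ℝ) < 1 + a n := by linarith [ha n]
    rw [mul_inv, mul_assoc, inv_mul_cancel₀ h1.ne', mul_one]
  have hcond_anti : ∀ s s', s' ≤ s → cond s → cond s' := by
    intro s s' hss hs
    constructor
    · exact le_trans (Finset.sum_le_sum_of_subset_of_nonneg
        (Finset.range_subset_range.2 (by omega)) (fun i _ _ => ha i)) hs.1
    · exact le_trans (Finset.sum_le_sum_of_subset_of_nonneg
        (Finset.range_subset_range.2 (by omega)) (fun i _ _ => hb i)) hs.2
  -- claim 1 : under full cond, S n ≥ u n - B n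
  have claim1 : ∀ n, (∀ s, s < n → cond s) →
      (P n)⁻¹ * y n - (∑ s ∈ Finset.range n, (P (s+1))⁻¹ * b s) ≤ S n := by
    intro n
    induction n with
    | zero => intro _; simp [hSdef, hPdef, hy0]
    | succ n ih =>
      intro hall
      have hcn : cond n := hall n (Nat.lt_succ_self n)
      have ihn := ih (fun s hs => hall s (Nat.lt_succ_of_lt hs))
      have hSn : S (n+1) = S n + (P (n+1))⁻¹ * (y (n+1) - ((1 + a n - c n) * y n + b n)) := by
        simp only [hSdef]
        simp only [Finset.sum_range_succ, if_pos hcn]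
      have hBn : (∑ s ∈ Finset.range (n+1), (P (s+1))⁻¹ * b s)
          = (∑ s ∈ Finset.range n, (P (s+1))⁻¹ * b s) + (P (n+1))⁻¹ * b n :=
        Finset.sum_range_succ _ _
      have hcy : 0 ≤ (P (n+1))⁻¹ * (c n * y n) :=
        mul_nonneg (inv_nonneg.2 (hP0 _).le) (mul_nonneg (hc n) (hy n))
      have hexp : (P (n+1))⁻¹ * (y (n+1) - ((1 + a n - c n) * y n + b n))
          = (P (n+1))⁻¹ * y (n+1) - (P n)⁻¹ * y n + (P (n+1))⁻¹ * (c n * y n)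
            - (P (n+1))⁻¹ * b n := by
        rw [← hQP n]; ring
      rw [hSn, hBn, hexp]
      linarith
  have claim2 : ∀ n, (∀ s, s < n → cond s) → -K ≤ S n := by
    intro n hall
    have h1 := claim1 n hall
    have h2 : (∑ s ∈ Finset.range n, (P (s+1))⁻¹ * b s) ≤ K := by
      have hle : (∑ s ∈ Finset.range n, (P (s+1))⁻¹ * b s) ≤ ∑ s ∈ Finset.range n, b s := by
        apply Finset.sum_le_sum
        intro i _
        have hinv : (P (i+1))⁻¹ ≤ 1 := by
          rw [inv_le_one_iff₀]
          right; exact hP1 (i+1)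
        nlinarith [hb i, inv_nonneg.2 (hP0 (i+1)).le]
      rcases Nat.eq_zero_or_pos n with hn | hn
      · subst hn
        simpa using hK
      · have hb2 := (hall (n-1) (by omega)).2
        have hn1 : n - 1 + 1 = n := by omega
        rw [hn1] at hb2
        exact le_trans hle hb2
    have h3 : 0 ≤ (P n)⁻¹ * y n := mul_nonneg (inv_nonneg.2 (hP0 n).le) (hy n)
    linarith
  by_cases hall : ∀ s, s < t → cond s
  · exact claim2 t hall
  · push_neg at hall
    obtain ⟨s₀, hs₀t, hs₀⟩ := hall
    have hex : ∃ s, ¬ cond s := ⟨s₀, hs₀⟩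
    set m := Nat.find hex with hm
    have hmnot : ¬ cond m := Nat.find_spec hex
    have hmin : ∀ s, s < m → cond s := by
      intro s hs
      rw [hm] at hs
      exact not_not.1 (Nat.find_min hex hs)
    have hmle : m ≤ s₀ := Nat.find_le hs₀
    have hSt : S t = S m := by
      simp only [hSdef]
      have hmt : m ≤ t := le_trans hmle (le_of_lt hs₀t)
      rw [← Finset.sum_range_add_sum_Ico _ hmt]
      have hzero : ∑ s ∈ Finset.Ico m t,
          (if cond s then (P (s+1))⁻¹ else 0) * (y (s+1) - ((1 + a s - c s) * y s + b s)) = 0 := by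
        apply Finset.sum_eq_zero
        intro s hs
        have hms : m ≤ s := (Finset.mem_Ico.1 hs).1
        have : ¬ cond s := fun hcs => hmnot (hcond_anti s m hms hcs)
        simp [this]
      rw [hzero, add_zero]
    rw [hSt]
    exact claim2 m hmin


private lemma pathwise (y a b c : ℕ → ℝ)
    (hy : ∀ t, 0 ≤ y t) (ha : ∀ t, 0 ≤ a t) (hb : ∀ t, 0 ≤ b t) (hc : ∀ t, 0 ≤ c t)
    (hy0 : y 0 = 0) (hA : Summable a) (hB : Summable b) (hC : ¬ Summable c)
    (L : ℝ)
    (hX : Tendsto (fun n => ∑ s ∈ Finset.range n,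
        (∏ r ∈ Finset.range (s+1), (1 + a r))⁻¹
          * (y (s+1) - ((1 + a s - c s) * y s + b s))) atTop (𝓝 L)) :
    Tendsto y atTop (𝓝 0) := by
  classical
  set P : ℕ → ℝ := fun n => ∏ r ∈ Finset.range n, (1 + a r) with hPdef
  have hP1 : ∀ n, 1 ≤ P n := by
    intro n
    simp only [hPdef]
    calc (1:ℝ) = ∏ r ∈ Finset.range n, 1 := by simp
      _ ≤ ∏ r ∈ Finset.range n, (1 + a r) :=
          Finset.prod_le_prod (fun i _ => zero_le_one) (fun i _ => by linarith [ha i])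
  have hP0 : ∀ n, 0 < P n := fun n => lt_of_lt_of_le one_pos (hP1 n)
  set M : ℝ := Real.exp (∑' t, a t) with hMdef
  have hM1 : 1 ≤ M := by
    rw [hMdef]
    calc (1:ℝ) = Real.exp 0 := Real.exp_zero.symm
      _ ≤ Real.exp (∑' t, a t) := Real.exp_le_exp.2 (tsum_nonneg ha)
  have hM0 : 0 < M := lt_of_lt_of_le one_pos hM1
  have hPM : ∀ n, P n ≤ M := by
    intro n
    have h1 : P n ≤ ∏ r ∈ Finset.range n, Real.exp (a r) :=
      Finset.prod_le_prod (fun i _ => by linarith [ha i])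
        (fun i _ => by linarith [Real.add_one_le_exp (a i)])
    have h2 : ∏ r ∈ Finset.range n, Real.exp (a r) = Real.exp (∑ r ∈ Finset.range n, a r) :=
      (Real.exp_sum _ _).symm
    rw [h2] at h1
    exact h1.trans (Real.exp_le_exp.2 (Summable.sum_le_tsum _ (fun i _ => ha i) hA))
  have hQP : ∀ n, (P (n+1))⁻¹ * (1 + a n) = (P n)⁻¹ := by
    intro n
    have hPsucc : P (n+1) = P n * (1 + a n) := by
      simp only [hPdef]; exact Finset.prod_range_succ _ _
    have h1 : (0:ℝ) < 1 + a n := by linarith [ha n]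
    rw [hPsucc, mul_inv, mul_assoc, inv_mul_cancel₀ h1.ne', mul_one]
  set u : ℕ → ℝ := fun n => (P n)⁻¹ * y n with hudef
  have hu_nonneg : ∀ n, 0 ≤ u n := fun n => mul_nonneg (inv_nonneg.2 (hP0 n).le) (hy n)
  have hu0 : u 0 = 0 := by simp [hudef, hy0]
  set C : ℕ → ℝ := fun n => ∑ s ∈ Finset.range n, (P (s+1))⁻¹ * (c s * y s) with hCdef
  set B : ℕ → ℝ := fun n => ∑ s ∈ Finset.range n, (P (s+1))⁻¹ * b s with hBdef
  have hkey : ∀ n, (∑ s ∈ Finset.range n,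
      (P (s+1))⁻¹ * (y (s+1) - ((1 + a s - c s) * y s + b s)))
      = u n + C n - B n := by
    intro n
    have hterm : ∀ s, (P (s+1))⁻¹ * (y (s+1) - ((1 + a s - c s) * y s + b s))
        = (u (s+1) - u s) + (P (s+1))⁻¹ * (c s * y s) - (P (s+1))⁻¹ * b s := by
      intro s
      simp only [hudef]
      rw [← hQP s]
      ring
    calc (∑ s ∈ Finset.range n, (P (s+1))⁻¹ * (y (s+1) - ((1 + a s - c s) * y s + b s)))
        = ∑ s ∈ Finset.range n,
            ((u (s+1) - u s) + (P (s+1))⁻¹ * (c s * y s) - (P (s+1))⁻¹ * b s) :=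
          Finset.sum_congr rfl (fun s _ => hterm s)
      _ = (∑ s ∈ Finset.range n, (u (s+1) - u s)) + C n - B n := by
          rw [hCdef, hBdef]
          rw [Finset.sum_sub_distrib, Finset.sum_add_distrib]
      _ = u n + C n - B n := by
          rw [Finset.sum_range_sub u n, hu0, sub_zero]
  -- B converges
  have hBsummable : Summable (fun s => (P (s+1))⁻¹ * b s) := by
    apply Summable.of_nonneg_of_le
        (fun s => mul_nonneg (inv_nonneg.2 (hP0 _).le) (hb s)) _ hB
    intro s
    have hinv : (P (s+1))⁻¹ ≤ 1 := by
      rw [inv_le_one_iff₀]; right; exact hP1 (s+1)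
    nlinarith [hb s, inv_nonneg.2 (hP0 (s+1)).le]
  have hBconv : Tendsto B atTop (𝓝 (∑' s, (P (s+1))⁻¹ * b s)) := by
    simpa only [hBdef] using hBsummable.hasSum.tendsto_sum_nat
  -- u + C converges
  have hUC : Tendsto (fun n => u n + C n) atTop
      (𝓝 (L + (∑' s, (P (s+1))⁻¹ * b s))) := by
    have : (fun n => u n + C n) = (fun n => (∑ s ∈ Finset.range n,
        (P (s+1))⁻¹ * (y (s+1) - ((1 + a s - c s) * y s + b s))) + B n) := by
      funext n
      rw [hkey n]
      ring
    rw [this]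
    exact hX.add hBconv
  have hCmono : Monotone C := by
    apply monotone_nat_of_le_succ
    intro n
    simp only [hCdef, Finset.sum_range_succ]
    nlinarith [mul_nonneg (inv_nonneg.2 (hP0 (n+1)).le) (mul_nonneg (hc n) (hy n))]
  have hCbdd : BddAbove (Set.range C) := by
    obtain ⟨R, hR⟩ := (hUC.bddAbove_range : BddAbove (Set.range (fun n => u n + C n)))
    refine ⟨R, ?_⟩
    rintro x ⟨n, rfl⟩
    have : u n + C n ≤ R := hR ⟨n, rfl⟩
    linarith [hu_nonneg n]
  have hCconv : Tendsto C atTop (𝓝 (⨆ n, C n)) := tendsto_atTop_ciSup hCmono hCbdd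
  have huconv : Tendsto u atTop
      (𝓝 ((L + (∑' s, (P (s+1))⁻¹ * b s)) - (⨆ n, C n))) := by
    have : u = fun n => (u n + C n) - C n := by funext n; ring
    rw [this]
    exact hUC.sub hCconv
  set l : ℝ := (L + (∑' s, (P (s+1))⁻¹ * b s)) - (⨆ n, C n) with hldef
  have hl0 : 0 ≤ l := ge_of_tendsto' huconv hu_nonneg
  -- c * y summable
  have hsumQcy : Summable (fun s => (P (s+1))⁻¹ * (c s * y s)) := by
    apply summable_of_sum_range_le
        (fun s => mul_nonneg (inv_nonneg.2 (hP0 _).le) (mul_nonneg (hc s) (hy s)))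
    intro n
    exact le_ciSup hCbdd n
  -- l must be 0
  have hlzero : l = 0 := by
    by_contra hne
    have hlpos : 0 < l := lt_of_le_of_ne hl0 (Ne.symm hne)
    have hev : ∀ᶠ n in atTop, l/2 < u n :=
      Filter.Tendsto.eventually_const_lt (half_lt_self hlpos) huconv
    obtain ⟨N, hN⟩ := hev.exists_forall_of_atTop
    have hbound : ∀ n, c (n + N) ≤ (2/l) * M * ((P (n+N+1))⁻¹ * (c (n+N) * y (n+N))) := by
      intro n
      have h1 : l/2 < u (n+N) := hN (n+N) (by omega)
      have hyge : l/2 ≤ y (n+N) := by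
        have : u (n+N) ≤ y (n+N) := by
          have := hP1 (n+N)
          have h0 := hy (n+N)
          calc u (n+N) = (P (n+N))⁻¹ * y (n+N) := rfl
            _ ≤ 1 * y (n+N) := by
                apply mul_le_mul_of_nonneg_right _ h0
                rw [inv_le_one_iff₀]; right; exact hP1 (n+N)
            _ = y (n+N) := one_mul _
        linarith
      have hPinv : M⁻¹ ≤ (P (n+N+1))⁻¹ := by
        apply inv_anti₀ (hP0 _) (hPM _)
      have hcn := hc (n+N)
      have h2 : M⁻¹ * (c (n+N) * (l/2)) ≤ (P (n+N+1))⁻¹ * (c (n+N) * y (n+N)) := by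
        apply mul_le_mul hPinv _ (mul_nonneg hcn (half_pos hlpos).le) (inv_nonneg.2 (hP0 _).le)
        exact mul_le_mul_of_nonneg_left hyge hcn
      have hM0' : (0:ℝ) < M⁻¹ := inv_pos.2 hM0
      calc c (n+N) = (2/l) * M * (M⁻¹ * (c (n+N) * (l/2))) := by
            field_simp
          _ ≤ (2/l) * M * ((P (n+N+1))⁻¹ * (c (n+N) * y (n+N))) := by
            apply mul_le_mul_of_nonneg_left h2
            positivity
    have hsummc : Summable c := by
      have hshift : Summable (fun n => (P (n+N+1))⁻¹ * (c (n+N) * y (n+N))) := by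
        have := (summable_nat_add_iff N).2 hsumQcy
        exact this
      have h2 : Summable (fun n => (2/l) * M * ((P (n+N+1))⁻¹ * (c (n+N) * y (n+N)))) :=
        hshift.mul_left _
      have h3 : Summable (fun n => c (n + N)) :=
        Summable.of_nonneg_of_le (fun n => hc _) hbound h2
      exact (summable_nat_add_iff N).1 h3
    exact hC hsummc
  rw [hlzero] at huconv
  -- conclude
  have hyle : ∀ n, y n ≤ M * u n := by
    intro n
    have : y n = P n * u n := by
      simp only [hudef]
      rw [← mul_assoc, mul_inv_cancel₀ (hP0 n).ne', one_mul]
    rw [this]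
    exact mul_le_mul_of_nonneg_right (hPM n) (hu_nonneg n)
  have hMu : Tendsto (fun n => M * u n) atTop (𝓝 0) := by
    simpa using huconv.const_mul M
  exact squeeze_zero hy hyle hMu

private theorem RS_main {Ω : Type*} {m0 : MeasurableSpace Ω} {μ : Measure Ω}
    [IsProbabilityMeasure μ] (ℱ : Filtration ℕ m0) (y a b c : ℕ → Ω → ℝ)
    (hy : ∀ t ω, 0 ≤ y t ω) (ha : ∀ t ω, 0 ≤ a t ω) (hb : ∀ t ω, 0 ≤ b t ω)
    (hc : ∀ t ω, 0 ≤ c t ω) (hy0 : ∀ ω, y 0 ω = 0)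
    (hy_adapted : Adapted ℱ y) (ha_adapted : Adapted ℱ a) (hb_adapted : Adapted ℱ b)
    (hc_adapted : Adapted ℱ c)
    (hy_int : ∀ t, Integrable (y t) μ)
    (hrec : ∀ t, μ[y (t+1)|ℱ t] ≤ᵐ[μ] fun ω => (1 + a t ω - c t ω) * y t ω + b t ω)
    (ha_sum : ∀ᵐ ω ∂μ, Summable (fun t => a t ω))
    (hb_sum : ∀ᵐ ω ∂μ, Summable (fun t => b t ω))
    (hc_div : ∀ᵐ ω ∂μ, ¬ Summable (fun t => c t ω)) :
    ∀ᵐ ω ∂μ, Tendsto (fun t => y t ω) atTop (𝓝 0) := by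
  classical
  -- measurability helpers
  have ha_m : ∀ s t, s ≤ t → Measurable[ℱ t] (a s) :=
    fun s t h => (ha_adapted s).mono (ℱ.mono h) le_rfl
  have hb_m : ∀ s t, s ≤ t → Measurable[ℱ t] (b s) :=
    fun s t h => (hb_adapted s).mono (ℱ.mono h) le_rfl
  have hc_m : ∀ s t, s ≤ t → Measurable[ℱ t] (c s) :=
    fun s t h => (hc_adapted s).mono (ℱ.mono h) le_rfl
  have hy_m : ∀ s t, s ≤ t → Measurable[ℱ t] (y s) :=
    fun s t h => (hy_adapted s).mono (ℱ.mono h) le_rfl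
  set P : ℕ → Ω → ℝ := fun n ω => ∏ r ∈ Finset.range n, (1 + a r ω) with hPdef
  set ev : ℕ → ℕ → Set Ω := fun K t =>
    {ω | (∑ r ∈ Finset.range (t+1), a r ω) ≤ (K:ℝ) ∧
         (∑ r ∈ Finset.range (t+1), b r ω) ≤ (K:ℝ)} with hevdef
  set q : ℕ → ℕ → Ω → ℝ := fun K t => (ev K t).indicator (fun ω => (P (t+1) ω)⁻¹) with hqdef
  set D : ℕ → ℕ → Ω → ℝ := fun K t ω =>
    q K t ω * (y (t+1) ω - ((1 + a t ω - c t ω) * y t ω + b t ω)) with hDdef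
  set X : ℕ → ℕ → Ω → ℝ := fun K n ω => ∑ s ∈ Finset.range n, D K s ω with hXdef
  have hP1 : ∀ n ω, 1 ≤ P n ω := by
    intro n ω
    simp only [hPdef]
    calc (1:ℝ) = ∏ r ∈ Finset.range n, 1 := by simp
      _ ≤ ∏ r ∈ Finset.range n, (1 + a r ω) :=
          Finset.prod_le_prod (fun i _ => zero_le_one) (fun i _ => by linarith [ha i ω])
  have hP0 : ∀ n ω, 0 < P n ω := fun n ω => lt_of_lt_of_le one_pos (hP1 n ω)
  have hq_nonneg : ∀ K t ω, 0 ≤ q K t ω := by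
    intro K t ω
    simp only [hqdef]
    exact Set.indicator_nonneg (fun ω' _ => inv_nonneg.2 (hP0 _ _).le) ω
  have hq_le_one : ∀ K t ω, q K t ω ≤ 1 := by
    intro K t ω
    simp only [hqdef, Set.indicator_apply]
    split
    · rw [inv_le_one_iff₀]; right; exact hP1 _ _
    · exact zero_le_one
  have hP_m : ∀ t, Measurable[ℱ t] (P (t+1)) := by
    intro t
    simp only [hPdef]
    apply Finset.measurable_prod
    intro r hr
    exact measurable_const.add (ha_m r t (Nat.lt_succ_iff.1 (Finset.mem_range.1 hr)))
  have hev_meas : ∀ K t, MeasurableSet[ℱ t] (ev K t) := by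
    intro K t
    have hsa : Measurable[ℱ t] (fun ω => ∑ r ∈ Finset.range (t+1), a r ω) :=
      Finset.measurable_sum _ (fun r hr => ha_m r t (Nat.lt_succ_iff.1 (Finset.mem_range.1 hr)))
    have hsb : Measurable[ℱ t] (fun ω => ∑ r ∈ Finset.range (t+1), b r ω) :=
      Finset.measurable_sum _ (fun r hr => hb_m r t (Nat.lt_succ_iff.1 (Finset.mem_range.1 hr)))
    simp only [hevdef]
    rw [Set.setOf_and]
    exact (measurableSet_le hsa measurable_const).inter (measurableSet_le hsb measurable_const)
  have hq_meas : ∀ K t, StronglyMeasurable[ℱ t] (q K t) := by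
    intro K t
    simp only [hqdef]
    exact ((hP_m t).inv.stronglyMeasurable).indicator (hev_meas K t)
  have hr_meas : ∀ t, StronglyMeasurable[ℱ t]
      (fun ω => (1 + a t ω - c t ω) * y t ω + b t ω) := by
    intro t
    exact ((((measurable_const.add (ha_m t t le_rfl)).sub (hc_m t t le_rfl)).mul
      (hy_m t t le_rfl)).add (hb_m t t le_rfl)).stronglyMeasurable
  have haK : ∀ K t ω, ω ∈ ev K t → a t ω ≤ (K:ℝ) := by
    intro K t ω hω
    refine le_trans ?_ hω.1
    exact Finset.single_le_sum (f := fun r => a r ω) (fun i _ => ha i ω)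
      (Finset.self_mem_range_succ t)
  have hbK : ∀ K t ω, ω ∈ ev K t → b t ω ≤ (K:ℝ) := by
    intro K t ω hω
    refine le_trans ?_ hω.2
    exact Finset.single_le_sum (f := fun r => b r ω) (fun i _ => hb i ω)
      (Finset.self_mem_range_succ t)
  -- integrability
  have hI1 : ∀ K t, Integrable (fun ω => q K t ω * y (t+1) ω) μ := by
    intro K t
    apply Integrable.mono' (hy_int (t+1))
    · exact (((hq_meas K t).mono (ℱ.le t)).measurable.mul
        (hy_m (t+1) (t+1) le_rfl |>.mono (ℱ.le (t+1)) le_rfl)).aestronglyMeasurable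
    · refine Eventually.of_forall (fun ω => ?_)
      rw [Real.norm_eq_abs, abs_of_nonneg (mul_nonneg (hq_nonneg K t ω) (hy (t+1) ω))]
      exact mul_le_of_le_one_left (hy (t+1) ω) (hq_le_one K t ω)
  have hI2 : ∀ K t, Integrable (fun ω => q K t ω * ((1 + a t ω) * y t ω)) μ := by
    intro K t
    apply Integrable.mono' ((hy_int t).const_mul (1 + (K:ℝ)))
    · exact (((hq_meas K t).mono (ℱ.le t)).measurable.mul
        ((measurable_const.add ((ha_m t t le_rfl).mono (ℱ.le t) le_rfl)).mul
          ((hy_m t t le_rfl).mono (ℱ.le t) le_rfl))).aestronglyMeasurable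
    · refine Eventually.of_forall (fun ω => ?_)
      by_cases hω : ω ∈ ev K t
      · have h1 : q K t ω * ((1 + a t ω) * y t ω) ≤ 1 * ((1 + a t ω) * y t ω) :=
          mul_le_mul_of_nonneg_right (hq_le_one K t ω)
            (mul_nonneg (by linarith [ha t ω]) (hy t ω))
        have h2 : (1 + a t ω) * y t ω ≤ (1 + (K:ℝ)) * y t ω :=
          mul_le_mul_of_nonneg_right (by linarith [haK K t ω hω]) (hy t ω)
        rw [Real.norm_eq_abs, abs_of_nonneg (mul_nonneg (hq_nonneg K t ω)
          (mul_nonneg (by linarith [ha t ω]) (hy t ω)))]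
        linarith
      · simp only [hqdef, Set.indicator_of_notMem hω]
        rw [zero_mul, norm_zero]
        have : (0:ℝ) ≤ (K:ℝ) := Nat.cast_nonneg K
        nlinarith [hy t ω]
  have hI3 : ∀ K t, Integrable (fun ω => q K t ω * b t ω) μ := by
    intro K t
    apply Integrable.mono' (integrable_const (K:ℝ))
    · exact (((hq_meas K t).mono (ℱ.le t)).measurable.mul
        ((hb_m t t le_rfl).mono (ℱ.le t) le_rfl)).aestronglyMeasurable
    · refine Eventually.of_forall (fun ω => ?_)
      by_cases hω : ω ∈ ev K t
      · rw [Real.norm_eq_abs, abs_of_nonneg (mul_nonneg (hq_nonneg K t ω) (hb t ω))]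
        calc q K t ω * b t ω ≤ 1 * b t ω :=
              mul_le_mul_of_nonneg_right (hq_le_one K t ω) (hb t ω)
          _ = b t ω := one_mul _
          _ ≤ (K:ℝ) := hbK K t ω hω
      · simp only [hqdef, Set.indicator_of_notMem hω]
        rw [zero_mul, norm_zero]
        exact Nat.cast_nonneg K
  have hcy_ae : ∀ t, ∀ᵐ ω ∂μ, c t ω * y t ω ≤ (1 + a t ω) * y t ω + b t ω := by
    intro t
    have h0 : 0 ≤ᵐ[μ] μ[y (t+1)|ℱ t] := condExp_nonneg (Eventually.of_forall (hy (t+1)))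
    filter_upwards [h0, hrec t] with ω h0ω hrω
    simp only [Pi.zero_apply] at h0ω
    nlinarith [h0ω.trans hrω]
  have hI4 : ∀ K t, Integrable (fun ω => q K t ω * (c t ω * y t ω)) μ := by
    intro K t
    apply Integrable.mono' (((hy_int t).const_mul (1 + (K:ℝ))).add (integrable_const (K:ℝ)))
    · exact (((hq_meas K t).mono (ℱ.le t)).measurable.mul
        (((hc_m t t le_rfl).mono (ℱ.le t) le_rfl).mul
          ((hy_m t t le_rfl).mono (ℱ.le t) le_rfl))).aestronglyMeasurable
    · filter_upwards [hcy_ae t] with ω hcyω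
      have hK0 : (0:ℝ) ≤ (K:ℝ) := Nat.cast_nonneg K
      by_cases hω : ω ∈ ev K t
      · rw [Real.norm_eq_abs, abs_of_nonneg (mul_nonneg (hq_nonneg K t ω)
          (mul_nonneg (hc t ω) (hy t ω)))]
        have h1 : q K t ω * (c t ω * y t ω) ≤ 1 * (c t ω * y t ω) :=
          mul_le_mul_of_nonneg_right (hq_le_one K t ω) (mul_nonneg (hc t ω) (hy t ω))
        have h2 : (1 + a t ω) * y t ω ≤ (1 + (K:ℝ)) * y t ω :=
          mul_le_mul_of_nonneg_right (by linarith [haK K t ω hω]) (hy t ω)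
        have h3 := hbK K t ω hω
        simp only [Pi.add_apply]
        linarith
      · simp only [hqdef, Set.indicator_of_notMem hω]
        rw [zero_mul, norm_zero]
        simp only [Pi.add_apply]
        nlinarith [hy t ω]
  have hqr_int : ∀ K t, Integrable
      (fun ω => q K t ω * ((1 + a t ω - c t ω) * y t ω + b t ω)) μ := by
    intro K t
    have heq : (fun ω => q K t ω * ((1 + a t ω - c t ω) * y t ω + b t ω))
        = fun ω => (q K t ω * ((1 + a t ω) * y t ω) + q K t ω * b t ω)
            - q K t ω * (c t ω * y t ω) := by
      funext ω; ring
    rw [heq]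
    exact ((hI2 K t).add (hI3 K t)).sub (hI4 K t)
  have hD_int : ∀ K t, Integrable (D K t) μ := by
    intro K t
    have heq : D K t = fun ω => q K t ω * y (t+1) ω
        - q K t ω * ((1 + a t ω - c t ω) * y t ω + b t ω) := by
      funext ω; simp only [hDdef]; ring
    rw [heq]
    exact (hI1 K t).sub (hqr_int K t)
  have hX_int : ∀ K n, Integrable (X K n) μ := by
    intro K n
    simp only [hXdef]
    exact integrable_finset_sum _ (fun s _ => hD_int K s)
  have hX_adapted : ∀ K, Adapted ℱ (X K) := by
    intro K n
    simp only [hXdef]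
    apply Finset.measurable_sum
    intro s hs
    have hsn : s + 1 ≤ n := Finset.mem_range.1 hs
    have h1 : StronglyMeasurable[ℱ n] (q K s) := (hq_meas K s).mono (ℱ.mono (by omega))
    have h2 : Measurable[ℱ n] (y (s+1)) := hy_m (s+1) n hsn
    have h3 : Measurable[ℱ n] (fun ω => (1 + a s ω - c s ω) * y s ω + b s ω) :=
      ((hr_meas s).mono (ℱ.mono (by omega))).measurable
    simp only [hDdef]
    exact h1.measurable.mul (h2.sub h3)
  -- supermartingale property
  have hsup : ∀ K t, μ[X K (t+1)|ℱ t] ≤ᵐ[μ] X K t := by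
    intro K t
    have hXsucc : X K (t+1) = X K t + D K t := by
      funext ω
      simp only [hXdef, Pi.add_apply]
      exact Finset.sum_range_succ _ _
    have h1 : μ[X K (t+1)|ℱ t] =ᵐ[μ] μ[X K t|ℱ t] + μ[D K t|ℱ t] := by
      rw [hXsucc]
      exact condExp_add (hX_int K t) (hD_int K t) _
    have h2 : μ[X K t|ℱ t] = X K t :=
      condExp_of_stronglyMeasurable (ℱ.le t) (hX_adapted K t).stronglyMeasurable (hX_int K t)
    have hDsplit : D K t = (fun ω => q K t ω * y (t+1) ω)
        - (fun ω => q K t ω * ((1 + a t ω - c t ω) * y t ω + b t ω)) := by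
      funext ω
      simp only [hDdef, Pi.sub_apply]
      ring
    have h3 : μ[D K t|ℱ t] =ᵐ[μ]
        μ[fun ω => q K t ω * y (t+1) ω|ℱ t]
          - μ[fun ω => q K t ω * ((1 + a t ω - c t ω) * y t ω + b t ω)|ℱ t] := by
      rw [hDsplit]
      exact condExp_sub (hI1 K t) (hqr_int K t) _
    have h4 : μ[fun ω => q K t ω * y (t+1) ω|ℱ t]
        =ᵐ[μ] fun ω => q K t ω * (μ[y (t+1)|ℱ t]) ω := by
      have := condExp_mul_of_stronglyMeasurable_left (hq_meas K t)
        (show Integrable (q K t * y (t+1)) μ from hI1 K t) (hy_int (t+1))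
      exact this
    have h5 : μ[fun ω => q K t ω * ((1 + a t ω - c t ω) * y t ω + b t ω)|ℱ t]
        = fun ω => q K t ω * ((1 + a t ω - c t ω) * y t ω + b t ω) := by
      apply condExp_of_stronglyMeasurable (ℱ.le t)
      · exact ((hq_meas K t).measurable.mul (hr_meas t).measurable).stronglyMeasurable
      · exact hqr_int K t
    filter_upwards [h1, h3, h4, hrec t] with ω e1 e3 e4 hrω
    rw [e1, Pi.add_apply, h2]
    have e3' := e3
    rw [Pi.sub_apply] at e3'
    rw [e3', e4, h5]
    beta_reduce
    have hq0 := hq_nonneg K t ω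
    have hmul : q K t ω * (μ[y (t+1)|ℱ t]) ω
        ≤ q K t ω * ((1 + a t ω - c t ω) * y t ω + b t ω) :=
      mul_le_mul_of_nonneg_left hrω hq0
    linarith
  have hsuper : ∀ K, Supermartingale (X K) ℱ μ :=
    fun K => supermartingale_nat (hX_adapted K).stronglyAdapted (hX_int K) (fun t => hsup K t)
  -- pointwise lower bound
  have hXlb : ∀ (K n : ℕ) (ω : Ω), -(K:ℝ) ≤ X K n ω := by
    intro K n ω
    have := seq_lower_bound (fun t => y t ω) (fun t => a t ω) (fun t => b t ω)
      (fun t => c t ω) (K:ℝ) (Nat.cast_nonneg K) (fun t => hy t ω) (fun t => ha t ω)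
      (fun t => hb t ω) (fun t => hc t ω) (hy0 ω) n
    simp only [hXdef, hDdef, hqdef, hevdef, hPdef, Set.indicator_apply, Set.mem_setOf_eq]
    exact this
  -- expectation bound
  have hEX : ∀ K n, ∫ ω, X K n ω ∂μ ≤ 0 := by
    intro K n
    induction n with
    | zero => simp [hXdef]
    | succ n ih =>
      have h1 : ∫ ω, X K (n+1) ω ∂μ = ∫ ω, (μ[X K (n+1)|ℱ n]) ω ∂μ :=
        (integral_condExp (ℱ.le n)).symm
      have h2 : ∫ ω, (μ[X K (n+1)|ℱ n]) ω ∂μ ≤ ∫ ω, X K n ω ∂μ :=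
        integral_mono_ae integrable_condExp (hX_int K n) (hsup K n)
      linarith
  -- L¹ bound
  have hsnorm : ∀ K n, eLpNorm (X K n) 1 μ ≤ ENNReal.ofReal (2*(K:ℝ)) := by
    intro K n
    have hK0 : (0:ℝ) ≤ (K:ℝ) := Nat.cast_nonneg K
    have habs : ∀ ω, ‖X K n ω‖ ≤ X K n ω + 2*(K:ℝ) := by
      intro ω
      rw [Real.norm_eq_abs]
      rcases abs_cases (X K n ω) with ⟨h, _⟩ | ⟨h, _⟩
      · linarith
      · linarith [hXlb K n ω]
    have hint : ∫ ω, ‖X K n ω‖ ∂μ ≤ ∫ ω, (X K n ω + 2*(K:ℝ)) ∂μ :=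
      integral_mono (hX_int K n).norm ((hX_int K n).add (integrable_const _))
        habs
    have heq : ∫ ω, (X K n ω + 2*(K:ℝ)) ∂μ = (∫ ω, X K n ω ∂μ) + 2*(K:ℝ) := by
      rw [integral_add (hX_int K n) (integrable_const _), integral_const]
      simp [measure_univ]
    have hfinal : ∫ ω, ‖X K n ω‖ ∂μ ≤ 2*(K:ℝ) := by
      rw [heq] at hint
      linarith [hEX K n]
    calc eLpNorm (X K n) 1 μ = ∫⁻ ω, ‖X K n ω‖ₑ ∂μ := eLpNorm_one_eq_lintegral_enorm
      _ = ENNReal.ofReal (∫ ω, ‖X K n ω‖ ∂μ) :=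
          (ofReal_integral_norm_eq_lintegral_enorm (hX_int K n)).symm
      _ ≤ ENNReal.ofReal (2*(K:ℝ)) := ENNReal.ofReal_le_ofReal hfinal
  -- a.s. convergence of X K
  have hconv : ∀ K : ℕ, ∀ᵐ ω ∂μ, ∃ ll : ℝ, Tendsto (fun n => X K n ω) atTop (𝓝 ll) := by
    intro K
    have hsub : Submartingale (-(X K)) ℱ μ := (hsuper K).neg
    have hbdd : ∀ n, eLpNorm ((-(X K)) n) 1 μ ≤ ((2*(K:ℝ)).toNNReal : ℝ≥0∞) := by
      intro n
      have h1 : (-(X K)) n = -(X K n) := rfl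
      rw [h1, eLpNorm_neg]
      exact le_trans (hsnorm K n) (le_of_eq rfl)
    have := hsub.ae_tendsto_limitProcess hbdd
    filter_upwards [this] with ω hω
    refine ⟨-(ℱ.limitProcess (-(X K)) μ ω), ?_⟩
    have := hω.neg
    simp only [Pi.neg_apply, neg_neg] at this
    exact this
  -- combine
  have hall : ∀ᵐ ω ∂μ, ∀ K : ℕ, ∃ ll : ℝ, Tendsto (fun n => X K n ω) atTop (𝓝 ll) :=
    ae_all_iff.2 hconv
  filter_upwards [hall, ha_sum, hb_sum, hc_div] with ω hXω haω hbω hcω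
  set K := Nat.ceil (max (∑' t, a t ω) (∑' t, b t ω)) with hKdef
  have hmema : ∀ t, (∑ r ∈ Finset.range (t+1), a r ω) ≤ (K:ℝ) := by
    intro t
    refine le_trans (Summable.sum_le_tsum _ (fun i _ => ha i ω) haω) ?_
    exact le_trans (le_max_left _ _) (Nat.le_ceil _)
  have hmemb : ∀ t, (∑ r ∈ Finset.range (t+1), b r ω) ≤ (K:ℝ) := by
    intro t
    refine le_trans (Summable.sum_le_tsum _ (fun i _ => hb i ω) hbω) ?_
    exact le_trans (le_max_right _ _) (Nat.le_ceil _)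
  obtain ⟨L, hL⟩ := hXω K
  have heqX : (fun n => ∑ s ∈ Finset.range n,
      (∏ r ∈ Finset.range (s+1), (1 + a r ω))⁻¹
        * (y (s+1) ω - ((1 + a s ω - c s ω) * y s ω + b s ω)))
      = fun n => X K n ω := by
    funext n
    simp only [hXdef, hDdef, hqdef, hPdef]
    apply Finset.sum_congr rfl
    intro s _
    rw [Set.indicator_of_mem]
    simp only [hevdef, Set.mem_setOf_eq]
    exact ⟨hmema s, hmemb s⟩
  exact pathwise (fun t => y t ω) (fun t => a t ω) (fun t => b t ω) (fun t => c t ω)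
    (fun t => hy t ω) (fun t => ha t ω) (fun t => hb t ω) (fun t => hc t ω)
    (hy0 ω) haω hbω hcω L (by rw [heqX]; exact hL)

set_option maxHeartbeats 1000000 in
/-- Rate-of-convergence theorem: under the recursion
`E[z_{t+1}|F_t] ≤ (1+f_t)z_t + g_t - α_t z_t` with the stated summability and
step-size conditions for `λ ∈ (0,1)`, one has `z_t = o(t^{-λ})` almost surely. -/
theorem sa_rate_of_convergence {Ω : Type*} {m0 : MeasurableSpace Ω}
    {μ : Measure Ω} [IsProbabilityMeasure μ]
    (ℱ : Filtration ℕ m0)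
    (z f g α : ℕ → Ω → ℝ)
    (hz_nonneg : ∀ t, ∀ᵐ ω ∂μ, 0 ≤ z t ω)
    (hf_nonneg : ∀ t, ∀ᵐ ω ∂μ, 0 ≤ f t ω)
    (hg_nonneg : ∀ t, ∀ᵐ ω ∂μ, 0 ≤ g t ω)
    (hα_nonneg : ∀ t, ∀ᵐ ω ∂μ, 0 ≤ α t ω)
    (hz_adapted : Adapted ℱ z) (hf_adapted : Adapted ℱ f)
    (hg_adapted : Adapted ℱ g) (hα_adapted : Adapted ℱ α)
    (hz_int : ∀ t, Integrable (z t) μ)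
    (hrec : ∀ t, ∀ᵐ ω ∂μ,
      (μ[z (t + 1)|ℱ t]) ω ≤ (1 + f t ω) * z t ω + g t ω - α t ω * z t ω)
    (hf_sum : ∀ᵐ ω ∂μ, Summable (fun t => f t ω))
    (hg_sum : ∀ᵐ ω ∂μ, Summable (fun t => g t ω))
    (hα_div : ∀ᵐ ω ∂μ, ¬ Summable (fun t => α t ω))
    (lam : ℝ) (hlam : lam ∈ Set.Ioo (0:ℝ) 1)
    (hstep : ∀ᵐ ω ∂μ, ∃ T : ℕ, 1 ≤ T ∧ ∀ t ≥ T, lam / (t : ℝ) ≤ α t ω)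
    (hg_rate : ∀ᵐ ω ∂μ, Summable (fun t : ℕ => ((t : ℝ) + 1) ^ lam * g t ω))
    (hα_rate : ∀ᵐ ω ∂μ,
      ¬ Summable (fun t : ℕ => α (t + 1) ω - lam / ((t : ℝ) + 1))) :
    ∀ᵐ ω ∂μ, Tendsto (fun t : ℕ => (t : ℝ) ^ lam * z t ω) atTop (nhds 0) := by
  obtain ⟨hl0, hl1⟩ := hlam
  classical
  set y' : ℕ → Ω → ℝ := fun t ω => (t:ℝ)^lam * max (z t ω) 0 with hy'def
  set a' : ℕ → Ω → ℝ := fun t ω =>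
    (1+lam) * max (f t ω) 0 + max (lam/(t:ℝ) - α t ω) 0 with ha'def
  set b' : ℕ → Ω → ℝ := fun t ω =>
    if t = 0 then (1 + max (f 0 ω) 0) * max (z 0 ω) 0 + max (g 0 ω) 0
    else ((t:ℝ)+1)^lam * max (g t ω) 0 with hb'def
  set c' : ℕ → Ω → ℝ := fun t ω => max (α t ω - lam/(t:ℝ)) 0 with hc'def
  have hy' : ∀ t ω, 0 ≤ y' t ω := fun t ω =>
    mul_nonneg (Real.rpow_nonneg (Nat.cast_nonneg t) _) (le_max_right _ _)
  have ha' : ∀ t ω, 0 ≤ a' t ω := fun t ω =>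
    add_nonneg (mul_nonneg (by linarith) (le_max_right _ _)) (le_max_right _ _)
  have hb' : ∀ t ω, 0 ≤ b' t ω := by
    intro t ω
    simp only [hb'def]
    split
    · exact add_nonneg (mul_nonneg (by positivity) (le_max_right _ _)) (le_max_right _ _)
    · exact mul_nonneg (Real.rpow_nonneg (by positivity) _) (le_max_right _ _)
  have hc' : ∀ t ω, 0 ≤ c' t ω := fun t ω => le_max_right _ _
  have hy'0 : ∀ ω, y' 0 ω = 0 := by
    intro ω
    simp only [hy'def, Nat.cast_zero, Real.zero_rpow hl0.ne', zero_mul]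
  have hy'_ad : Adapted ℱ y' := fun t =>
    ((hz_adapted t).max measurable_const).const_mul _
  have ha'_ad : Adapted ℱ a' := fun t =>
    ((((hf_adapted t).max measurable_const).const_mul _).add
      (((measurable_const.sub (hα_adapted t))).max
        measurable_const))
  have hb'_ad : Adapted ℱ b' := by
    intro t
    rcases Nat.eq_zero_or_pos t with rfl | htpos
    · have : b' 0 = fun ω => (1 + max (f 0 ω) 0) * max (z 0 ω) 0 + max (g 0 ω) 0 := by
        funext ω; simp [hb'def]
      rw [this]
      exact (((measurable_const.add
        ((hf_adapted 0).max measurable_const)).mul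
        ((hz_adapted 0).max measurable_const)).add
        ((hg_adapted 0).max measurable_const))
    · have hne : t ≠ 0 := by omega
      have : b' t = fun ω => ((t:ℝ)+1)^lam * max (g t ω) 0 := by
        funext ω; simp [hb'def, hne]
      rw [this]
      exact ((hg_adapted t).max measurable_const).const_mul _
  have hc'_ad : Adapted ℱ c' := fun t =>
    (((hα_adapted t).sub measurable_const).max
      measurable_const)
  have hy'_int : ∀ t, Integrable (y' t) μ := fun t => ((hz_int t).pos_part).const_mul _
  -- the recursion for y'
  have hrec' : ∀ t, μ[y' (t+1)|ℱ t] ≤ᵐ[μ]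
      fun ω => (1 + a' t ω - c' t ω) * y' t ω + b' t ω := by
    intro t
    have hy'eq : y' (t+1) =ᵐ[μ] (((t+1:ℕ):ℝ)^lam) • z (t+1) := by
      filter_upwards [hz_nonneg (t+1)] with ω h
      simp only [hy'def, Pi.smul_apply, smul_eq_mul, max_eq_left h]
    have h1 : μ[y' (t+1)|ℱ t] =ᵐ[μ] (((t+1:ℕ):ℝ)^lam) • μ[z (t+1)|ℱ t] :=
      (condExp_congr_ae hy'eq).trans (condExp_smul _ _ _)
    filter_upwards [h1, hrec t, hz_nonneg t, hf_nonneg t, hg_nonneg t, hα_nonneg t]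
      with ω e1 hrω hzω hfω hgω hαω
    rw [e1, Pi.smul_apply, smul_eq_mul]
    have hpow_nonneg : (0:ℝ) ≤ ((t+1:ℕ):ℝ)^lam := Real.rpow_nonneg (Nat.cast_nonneg _) _
    have step1 : ((t+1:ℕ):ℝ)^lam * (μ[z (t+1)|ℱ t]) ω
        ≤ ((t+1:ℕ):ℝ)^lam * ((1 + f t ω) * z t ω + g t ω - α t ω * z t ω) :=
      mul_le_mul_of_nonneg_left hrω hpow_nonneg
    refine le_trans step1 ?_
    rcases Nat.eq_zero_or_pos t with rfl | htpos
    · simp only [hy'def, ha'def, hb'def, hc'def, if_pos rfl]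
      rw [max_eq_left hzω, max_eq_left hfω, max_eq_left hgω]
      have h00 : ((0:ℕ):ℝ)^lam = 0 := by
        rw [Nat.cast_zero, Real.zero_rpow hl0.ne']
      rw [h00]
      push_cast
      rw [Real.one_rpow]
      nlinarith [mul_nonneg hαω hzω]
    · have ht1 : 1 ≤ t := htpos
      have hne : t ≠ 0 := by omega
      simp only [hy'def, ha'def, hb'def, hc'def, if_neg hne]
      rw [max_eq_left hzω, max_eq_left hfω, max_eq_left hgω]
      have hmax : max (lam/(t:ℝ) - α t ω) 0 - max (α t ω - lam/(t:ℝ)) 0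
          = lam/(t:ℝ) - α t ω := by
        rcases le_total (lam/(t:ℝ) - α t ω) 0 with h | h
        · rw [max_eq_right h, max_eq_left (by linarith)]; ring
        · rw [max_eq_left h, max_eq_right (by linarith)]; ring
      have hco : 1 + ((1+lam) * f t ω + max (lam/(t:ℝ) - α t ω) 0)
          - max (α t ω - lam/(t:ℝ)) 0
          = 1 + ((1+lam) * f t ω + lam/(t:ℝ) - α t ω) := by linarith
      have hkey := aux_scalar hl0 hl1 ht1 hfω hαω hzω
      push_cast
      push_cast at hco hkey
      rw [hco]
      nlinarith [hkey]
  -- summability of a'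
  have ha'_sum : ∀ᵐ ω ∂μ, Summable (fun t => a' t ω) := by
    have hf_all : ∀ᵐ ω ∂μ, ∀ t, 0 ≤ f t ω := ae_all_iff.2 hf_nonneg
    filter_upwards [hf_sum, hstep, hf_all] with ω hsum hT hfa
    obtain ⟨T, hT1, hTs⟩ := hT
    have h1 : Summable (fun t => (1+lam) * max (f t ω) 0) := by
      have he : (fun t => (1+lam) * max (f t ω) 0) = fun t => (1+lam) * f t ω :=
        funext fun t => by rw [max_eq_left (hfa t)]
      rw [he]
      exact hsum.mul_left _
    have h2 : Summable (fun t : ℕ => max (lam/(t:ℝ) - α t ω) 0) := by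
      apply summable_of_ne_finset_zero (s := Finset.range T)
      intro t ht
      have htT : T ≤ t := Nat.le_of_not_lt (fun h => ht (Finset.mem_range.2 h))
      have := hTs t htT
      exact max_eq_right (by linarith)
    simpa only [ha'def] using h1.add h2
  -- summability of b'
  have hb'_sum : ∀ᵐ ω ∂μ, Summable (fun t => b' t ω) := by
    have hg_all : ∀ᵐ ω ∂μ, ∀ t, 0 ≤ g t ω := ae_all_iff.2 hg_nonneg
    filter_upwards [hg_rate, hg_all] with ω hrate hga
    have h2 : Summable (fun n : ℕ => ((↑(n+1):ℝ)+1)^lam * g (n+1) ω) :=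
      (summable_nat_add_iff 1).2 hrate
    have h1 : Summable (fun n => b' (n+1) ω) := by
      refine h2.congr ?_
      intro n
      simp only [hb'def, if_neg (Nat.succ_ne_zero n), max_eq_left (hga (n+1))]
    exact (summable_nat_add_iff 1).1 h1
  -- divergence of c'
  have hc'_div : ∀ᵐ ω ∂μ, ¬ Summable (fun t => c' t ω) := by
    filter_upwards [hα_rate, hstep] with ω hrate hT
    intro hcs
    obtain ⟨T, hT1, hTs⟩ := hT
    apply hrate
    have h1 : Summable (fun n => c' (n+1) ω) := (summable_nat_add_iff 1).2 hcs
    have h4 : Summable (fun n => α (n+T+1) ω - lam/((((n+T:ℕ)):ℝ)+1)) := by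
      refine ((summable_nat_add_iff T).2 h1).congr ?_
      intro n
      have hge : T ≤ n+T+1 := by omega
      have hst := hTs (n+T+1) hge
      simp only [hc'def]
      rw [max_eq_left (by linarith)]
      push_cast
      ring_nf
    exact (summable_nat_add_iff T).1 h4
  have hz_all : ∀ᵐ ω ∂μ, ∀ t, 0 ≤ z t ω := ae_all_iff.2 hz_nonneg
  have hmain := RS_main ℱ y' a' b' c' hy' ha' hb' hc' hy'0 hy'_ad ha'_ad hb'_ad hc'_ad
    hy'_int hrec' ha'_sum hb'_sum hc'_div
  filter_upwards [hmain, hz_all] with ω h1 h2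
  have he : (fun t : ℕ => (t:ℝ)^lam * z t ω) = fun t => y' t ω := by
    funext t
    simp only [hy'def, max_eq_left (h2 t)]
  rw [he]
  exact h1
end
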